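/- arXiv:1708.07372 — 4 statements merged into one kernel-verified Lean document; each statement's English description precedes it below -/
import Mathlib

section
/- Let Ω be a d-cycle. Then the set of facets of Ω is a disjoint union of the sets of facets of a family of face-minimal d-cycles; that is, there exist face-minimal d-cycles Ω_1, …, Ω_k with pairwise disjoint facet sets such that Facets(Ω) = Facets(Ω_1) ∪ ⋯ ∪ Facets(Ω_k). -/
namespace ClutterPaper

variable {α : Type*} [DecidableEq α]

/-- `C` is a uniform clutter on vertex set `V` all of whose circuits have cardinality `c`
(i.e. a `(c-1)`-dimensional uniform clutter). -/
def IsClutter (V : Finset α) (c : ℕ) (C : Finset (Finset α)) : Prop :=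
  ∀ F ∈ C, F ⊆ V ∧ F.card = c

/-- The complement clutter `C̄`: all `c`-subsets of `V` not in `C`. -/
def compClutter (V : Finset α) (c : ℕ) (C : Finset (Finset α)) : Finset (Finset α) :=
  V.powersetCard c \ C

/-- `C^∨ = { V \ F | F ∈ C̄ }`. -/
def clutterDual (V : Finset α) (c : ℕ) (C : Finset (Finset α)) : Finset (Finset α) :=
  (compClutter V c C).image fun F => V \ F

/-- `A` is a clique of the clutter `C` (with circuit cardinality `c`) on vertex set `V`:
all `c`-subsets of `A` are circuits. -/
def IsClique (V : Finset α) (c : ℕ) (C : Finset (Finset α)) (A : Finset α) : Prop :=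
  A ⊆ V ∧ ∀ F ⊆ A, F.card = c → F ∈ C

/-- The closed neighborhood `N_C[e] = e ∪ { v ∈ V | e ∪ {v} ∈ C }`. -/
def closedNbhd (V : Finset α) (C : Finset (Finset α)) (e : Finset α) : Finset α :=
  e ∪ V.filter fun v => insert v e ∈ C

/-- `e` is a maximal subcircuit of the clutter `C` with circuit cardinality `c`:
`e` has cardinality `c - 1` and is contained in some circuit. -/
def IsMS (c : ℕ) (C : Finset (Finset α)) (e : Finset α) : Prop :=
  e.card + 1 = c ∧ ∃ F ∈ C, e ⊆ F

/-- `e` is a simplicial maximal subcircuit: a maximal subcircuit whose closed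
neighborhood is a clique. -/
def IsSMS (V : Finset α) (c : ℕ) (C : Finset (Finset α)) (e : Finset α) : Prop :=
  IsMS c C e ∧ IsClique V c C (closedNbhd V C e)

/-- `e` is a free maximal subcircuit: contained in exactly one circuit. -/
def IsFreeMS (c : ℕ) (C : Finset (Finset α)) (e : Finset α) : Prop :=
  e.card + 1 = c ∧ ∃! F, F ∈ C ∧ e ⊆ F

/-- Deletion `C − e` of a maximal subcircuit: the circuits not containing `e`. -/
def delMS (C : Finset (Finset α)) (e : Finset α) : Finset (Finset α) :=
  C.filter fun F => ¬ e ⊆ F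

/-- Deletion of a vertex: circuits (or faces) not containing `v`. -/
def delVert (C : Finset (Finset α)) (v : α) : Finset (Finset α) :=
  C.filter fun F => v ∉ F

/-- Chordality of a uniform clutter (circuit cardinality `c`) on `V`: there is a sequence of
deletions of simplicial maximal subcircuits ending in the clutter with no circuits. -/
inductive Chordal (V : Finset α) (c : ℕ) : Finset (Finset α) → Prop
  | empty : Chordal V c ∅
  | step {C : Finset (Finset α)} (e : Finset α) :
      IsSMS V c C e → Chordal V c (delMS C e) → Chordal V c C

/-- The ascent `C⁺` of a clutter with circuit cardinality `c`: all `(c+1)`-subsets of `V`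
that are cliques of `C`. -/
def ascent (V : Finset α) (c : ℕ) (C : Finset (Finset α)) : Finset (Finset α) :=
  (V.powersetCard (c + 1)).filter fun A => A.powersetCard c ⊆ C

/-- The simplicial complex `⟨D⟩` generated by a clutter `D`: all subsets of its elements. -/
def complexOf (D : Finset (Finset α)) : Finset (Finset α) :=
  D.biUnion Finset.powerset

/-- A family of finsets is a simplicial complex if it is downward closed. -/
def IsComplex (Δ : Finset (Finset α)) : Prop :=
  ∀ F ∈ Δ, ∀ G ⊆ F, G ∈ Δ

/-- The facets (maximal faces) of a simplicial complex. -/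
def facets (Δ : Finset (Finset α)) : Finset (Finset α) :=
  Δ.filter fun F => ∀ G ∈ Δ, F ⊆ G → F = G

/-- `link_Δ(v) = { F \ {v} | v ∈ F ∈ Δ }`. -/
def link (Δ : Finset (Finset α)) (v : α) : Finset (Finset α) :=
  (Δ.filter fun F => v ∈ F).image fun F => F.erase v

/-- `v` is a shedding vertex of `Δ`: no face of `link_Δ(v)` is a facet of `Δ − v`. -/
def Shedding (Δ : Finset (Finset α)) (v : α) : Prop :=
  ∀ F ∈ link Δ v, F ∉ facets (delVert Δ v)

/-- Alexander dual of a simplicial complex on vertex set `V`: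
`Δ^∨ = { V \ F | F ⊆ V, F ∉ Δ }`. -/
def alexDual (V : Finset α) (Δ : Finset (Finset α)) : Finset (Finset α) :=
  (V.powerset.filter fun F => F ∉ Δ).image fun F => V \ F

/-- `Δ` is pure with all facets of cardinality `c` (dimension `c - 1`), and nonempty. -/
def PureDim (Δ : Finset (Finset α)) (c : ℕ) : Prop :=
  Δ.Nonempty ∧ ∀ F ∈ facets Δ, F.card = c

/-- Vertex decomposability of a simplicial complex. -/
inductive VDecomp : Finset (Finset α) → Prop
  | simplex {Δ : Finset (Finset α)} : (facets Δ).card = 1 → VDecomp Δ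
  | shed {Δ : Finset (Finset α)} (v : α) : Shedding Δ v →
      VDecomp (link Δ v) → VDecomp (delVert Δ v) → VDecomp Δ

/-- The vertex set of a clutter (or of the complex it generates). -/
def vertexSet (Ω : Finset (Finset α)) : Finset α :=
  Ω.biUnion id

/-- `Ω` (given by its set of facets, each of cardinality `d+1`) is a `d`-cycle:
nonempty, pure of dimension `d`, `d`-path connected, and every `(d-1)`-dimensional
face lies in an even number of `d`-faces. -/
def IsCycle (d : ℕ) (Ω : Finset (Finset α)) : Prop :=
  Ω.Nonempty ∧ (∀ F ∈ Ω, F.card = d + 1) ∧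
    (∀ F ∈ Ω, ∀ G ∈ Ω,
      Relation.ReflTransGen (fun A B => A ∈ Ω ∧ B ∈ Ω ∧ (A ∩ B).card = d) F G) ∧
    ∀ e : Finset α, e.card = d → Even ((Ω.filter fun F => e ⊆ F).card)

/-- A face-minimal `d`-cycle: no `d`-cycle has a strictly smaller set of `d`-faces. -/
def FaceMinimalCycle (d : ℕ) (Ω : Finset (Finset α)) : Prop :=
  IsCycle d Ω ∧ ∀ Ω' : Finset (Finset α), IsCycle d Ω' → Ω' ⊆ Ω → Ω' = Ω

/-- `Ω` is `d`-complete: it contains every `(d+1)`-subset of its vertex set. -/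
def DComplete (d : ℕ) (Ω : Finset (Finset α)) : Prop :=
  ∀ F ⊆ vertexSet Ω, F.card = d + 1 → F ∈ Ω

/-- The complex `⟨C⟩` generated by the `d`-dimensional clutter `C` is `d`-chorded. -/
def Chorded (d : ℕ) (C : Finset (Finset α)) : Prop :=
  ∀ Ω : Finset (Finset α), FaceMinimalCycle d Ω → Ω ⊆ C → ¬ DComplete d Ω →
    ∃ (k : ℕ) (Ωs : Fin k → Finset (Finset α)), 2 ≤ k ∧
      (∀ i, IsCycle d (Ωs i) ∧ Ωs i ⊆ C) ∧
      (∀ F ∈ Ω, ∃ i, F ∈ Ωs i) ∧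
      (∀ F ∈ Ω, Odd ((Finset.univ.filter fun i => F ∈ Ωs i).card)) ∧
      (∀ F : Finset α, (∃ i, F ∈ Ωs i) → F ∉ Ω →
        Even ((Finset.univ.filter fun i => F ∈ Ωs i).card)) ∧
      ∀ i, vertexSet (Ωs i) ⊂ vertexSet Ω

/-- The circuits of `D` admit an admissible order. -/
def HasAdmissibleOrder (D : Finset (Finset α)) : Prop :=
  ∃ (t : ℕ) (F : Fin t → Finset α), Function.Injective F ∧
    (∀ G, G ∈ D ↔ ∃ i, F i = G) ∧
    ∀ i j : Fin t, j < i →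
      ∃ l ∈ F j \ F i, ∃ k : Fin t, k < i ∧ F k \ F i = {l}

/-- Contraction `D/v` of a (not necessarily uniform) clutter: the minimal sets of
`{ e \ {v} | e ∈ D }`. -/
def contractAux (D : Finset (Finset α)) (v : α) : Finset (Finset α) :=
  D.image fun e => e.erase v

def contract (D : Finset (Finset α)) (v : α) : Finset (Finset α) :=
  (contractAux D v).filter fun e => ∀ f ∈ contractAux D v, f ⊆ e → f = e

/-- `D` has a simplicial vertex (trivially true if `D` has no vertices). -/
def HasSimpVertex (D : Finset (Finset α)) : Prop :=
  vertexSet D = ∅ ∨ ∃ v ∈ vertexSet D, ∀ e₁ ∈ D, ∀ e₂ ∈ D, v ∈ e₁ → v ∈ e₂ →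
    ∃ e₃ ∈ D, e₃ ⊆ (e₁ ∪ e₂).erase v

/-- `D` is W-chordal: every clutter obtained from `D` by a sequence of vertex deletions
and contractions has a simplicial vertex. -/
def WChordal (D : Finset (Finset α)) : Prop :=
  ∀ D' : Finset (Finset α),
    Relation.ReflTransGen (fun X Y => ∃ v, Y = delVert X v ∨ Y = contract X v) D D' →
    HasSimpVertex D'

theorem adj_card (d : ℕ) (F G e : Finset α) (hF : F.card = d + 1) (hG : G.card = d + 1)
    (hFG : F ≠ G) (he : e.card = d) (heF : e ⊆ F) (heG : e ⊆ G) : (F ∩ G).card = d := by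
  have h1 : e ⊆ F ∩ G := Finset.subset_inter heF heG
  have h2 : d ≤ (F ∩ G).card := he ▸ Finset.card_le_card h1
  have h3 : (F ∩ G).card ≤ d + 1 := hF ▸ Finset.card_le_card (Finset.inter_subset_left)
  rcases eq_or_lt_of_le h3 with h4 | h4
  · exfalso
    have hFe : F ∩ G = F := Finset.eq_of_subset_of_card_le Finset.inter_subset_left (by omega)
    have : F ⊆ G := hFe ▸ Finset.inter_subset_right
    exact hFG (Finset.eq_of_subset_of_card_le this (by omega))
  · omega

theorem component_isCycle (d : ℕ) (Ω : Finset (Finset α))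
    (hpure : ∀ F ∈ Ω, F.card = d + 1)
    (heven : ∀ e : Finset α, e.card = d → Even ((Ω.filter fun F => e ⊆ F).card))
    (F₀ : Finset α) (hF₀ : F₀ ∈ Ω) :
    ∃ Ω' ⊆ Ω, IsCycle d Ω' := by
  classical
  set r : Finset α → Finset α → Prop := fun A B => A ∈ Ω ∧ B ∈ Ω ∧ (A ∩ B).card = d with hr
  set Ω₀ : Finset (Finset α) := Ω.filter (fun F => Relation.ReflTransGen r F₀ F) with hΩ₀
  have hsub : Ω₀ ⊆ Ω := Finset.filter_subset _ _
  have hmem : ∀ {F}, F ∈ Ω₀ ↔ F ∈ Ω ∧ Relation.ReflTransGen r F₀ F := by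
    intro F; simp [hΩ₀]
  have hF₀0 : F₀ ∈ Ω₀ := hmem.2 ⟨hF₀, .refl⟩
  -- saturation: if some member of Ω₀ contains e, all members of Ω containing e are in Ω₀
  have hsat : ∀ (e : Finset α), e.card = d → ∀ G ∈ Ω₀, e ⊆ G → ∀ F ∈ Ω, e ⊆ F → F ∈ Ω₀ := by
    intro e he G hG heG F hF heF
    rcases eq_or_ne F G with rfl | hne
    · exact hG
    · refine hmem.2 ⟨hF, ?_⟩
      exact (hmem.1 hG).2.tail ⟨hsub hG, hF, adj_card d G F e (hpure _ (hsub hG)) (hpure _ hF)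
        (Ne.symm hne) he heG heF⟩
  refine ⟨Ω₀, hsub, ⟨F₀, hF₀0⟩, fun F hF => hpure F (hsub hF), ?_, ?_⟩
  · -- connectivity
    have rsymm : Symmetric r := by
      intro A B hAB
      exact ⟨hAB.2.1, hAB.1, by rw [Finset.inter_comm]; exact hAB.2.2⟩
    have lift : ∀ {A B}, Relation.ReflTransGen r A B → A ∈ Ω₀ →
        Relation.ReflTransGen (fun X Y => X ∈ Ω₀ ∧ Y ∈ Ω₀ ∧ (X ∩ Y).card = d) A B := by
      intro A B h
      induction h with
      | refl => intro _; exact .refl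
      | @tail b c hab hbc ih =>
        intro hA
        have hb : b ∈ Ω₀ := hmem.2 ⟨hbc.1, ((hmem.1 hA).2).trans hab⟩
        have hc : c ∈ Ω₀ := hmem.2 ⟨hbc.2.1, ((hmem.1 hb).2).tail hbc⟩
        exact (ih hA).tail ⟨hb, hc, hbc.2.2⟩
    intro F hF G hG
    have h1 : Relation.ReflTransGen r F G :=
      ((@Relation.ReflTransGen.stdSymm _ r ⟨rsymm⟩).symm _ _ (hmem.1 hF).2).trans (hmem.1 hG).2
    exact lift h1 hF
  · -- even
    intro e he
    by_cases hG : ∃ G ∈ Ω₀, e ⊆ G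
    · obtain ⟨G, hG, heG⟩ := hG
      have : Ω₀.filter (fun F => e ⊆ F) = Ω.filter (fun F => e ⊆ F) := by
        apply Finset.Subset.antisymm
        · exact Finset.filter_subset_filter _ hsub
        · intro F hF
          rw [Finset.mem_filter] at hF ⊢
          exact ⟨hsat e he G hG heG F hF.1 hF.2, hF.2⟩
      rw [this]; exact heven e he
    · have : Ω₀.filter (fun F => e ⊆ F) = ∅ := by
        rw [Finset.filter_eq_empty_iff]
        intro F hF heF
        exact hG ⟨F, hF, heF⟩
      simp [this]

theorem decomp_aux (d : ℕ) : ∀ (n : ℕ) (Ω : Finset (Finset α)), Ω.card = n →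
    (∀ F ∈ Ω, F.card = d + 1) →
    (∀ e : Finset α, e.card = d → Even ((Ω.filter fun F => e ⊆ F).card)) →
    ∃ (k : ℕ) (Ωs : Fin k → Finset (Finset α)),
      (∀ i, FaceMinimalCycle d (Ωs i)) ∧
      (∀ i j, i ≠ j → Disjoint (Ωs i) (Ωs j)) ∧
      Ω = Finset.univ.biUnion Ωs := by
  intro n
  induction n using Nat.strong_induction_on with
  | _ n ih =>
    classical
    intro Ω hcard hpure heven
    rcases Ω.eq_empty_or_nonempty with rfl | ⟨F₀, hF₀⟩
    · exact ⟨0, Fin.elim0, fun i => i.elim0, fun i => i.elim0, by simp⟩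
    · -- there is a cycle inside Ω
      obtain ⟨Ωc, hΩcsub, hΩccyc⟩ := component_isCycle d Ω hpure heven F₀ hF₀
      -- pick a minimal-card cycle inside Ω
      have hne : (Ω.powerset.filter (fun Ω' => IsCycle d Ω')).Nonempty :=
        ⟨Ωc, by simp [Finset.mem_filter, Finset.mem_powerset, hΩcsub, hΩccyc]⟩
      obtain ⟨Ω', hΩ'mem, hmin⟩ := Finset.exists_min_image _ Finset.card hne
      rw [Finset.mem_filter, Finset.mem_powerset] at hΩ'mem
      obtain ⟨hΩ'sub, hΩ'cyc⟩ := hΩ'mem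
      have hfm : FaceMinimalCycle d Ω' := by
        refine ⟨hΩ'cyc, fun Ω'' hcyc hsub => ?_⟩
        have : Ω'.card ≤ Ω''.card := hmin Ω'' (by
          rw [Finset.mem_filter, Finset.mem_powerset]
          exact ⟨hsub.trans hΩ'sub, hcyc⟩)
        exact Finset.eq_of_subset_of_card_le hsub (by omega) ▸ rfl
      -- remainder
      have hΩ'ne : Ω'.Nonempty := hΩ'cyc.1
      have hcardlt : (Ω \ Ω').card < n := by
        rw [Finset.card_sdiff_of_subset hΩ'sub]
        have h1 : 0 < Ω'.card := Finset.card_pos.2 hΩ'ne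
        have h2 : Ω'.card ≤ Ω.card := Finset.card_le_card hΩ'sub
        omega
      obtain ⟨k, Ωs, hfm', hdisj', huni'⟩ := ih _ hcardlt (Ω \ Ω') rfl
        (fun F hF => hpure F (Finset.mem_sdiff.1 hF).1)
        (by
          intro e he
          have hfe : (Ω \ Ω').filter (fun F => e ⊆ F) =
              Ω.filter (fun F => e ⊆ F) \ Ω'.filter (fun F => e ⊆ F) := by
            ext F
            simp only [Finset.mem_filter, Finset.mem_sdiff]
            tauto
          rw [hfe, Finset.card_sdiff_of_subset (Finset.filter_subset_filter _ hΩ'sub)]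
          exact (heven e he).tsub (hΩ'cyc.2.2.2 e he))
      refine ⟨k + 1, Fin.cons Ω' Ωs, ?_, ?_, ?_⟩
      · intro i
        refine Fin.cases ?_ ?_ i
        · exact hfm
        · intro j; exact hfm' j
      · have hsub' : ∀ j, Ωs j ⊆ Ω \ Ω' := by
          intro j
          rw [huni']
          exact Finset.subset_biUnion_of_mem Ωs (Finset.mem_univ j)
        intro i j
        induction i using Fin.cases with
        | zero =>
          induction j using Fin.cases with
          | zero => exact fun hij => absurd rfl hij
          | succ j' =>
            intro _
            simp only [Fin.cons_zero, Fin.cons_succ]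
            exact Finset.disjoint_sdiff.mono_right (hsub' j')
        | succ i' =>
          induction j using Fin.cases with
          | zero =>
            intro _
            simp only [Fin.cons_zero, Fin.cons_succ]
            exact (Finset.disjoint_sdiff.mono_right (hsub' i')).symm
          | succ j' =>
            intro hij
            simp only [Fin.cons_succ]
            exact hdisj' i' j' (fun h => hij (congrArg Fin.succ h))
      · ext F
        simp only [Finset.mem_biUnion, Finset.mem_univ, true_and]
        rw [Fin.exists_fin_succ]
        simp only [Fin.cons_zero, Fin.cons_succ]
        constructor
        · intro hF
          by_cases h : F ∈ Ω'
          · exact Or.inl h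
          · right
            have : F ∈ Ω \ Ω' := Finset.mem_sdiff.2 ⟨hF, h⟩
            rw [huni'] at this
            simpa using this
        · rintro (h | ⟨i, hi⟩)
          · exact hΩ'sub h
          · have : F ∈ Ω \ Ω' := by rw [huni']; exact Finset.mem_biUnion.2 ⟨i, Finset.mem_univ i, hi⟩
            exact (Finset.mem_sdiff.1 this).1


/-- The set of facets of a `d`-cycle is a disjoint union of the sets of
facets of a family of face-minimal `d`-cycles. -/
theorem cycle_eq_disjoint_union_face_minimal (d : ℕ) (Ω : Finset (Finset α))
    (h : IsCycle d Ω) :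
    ∃ (k : ℕ) (Ωs : Fin k → Finset (Finset α)),
      (∀ i, FaceMinimalCycle d (Ωs i)) ∧
      (∀ i j, i ≠ j → Disjoint (Ωs i) (Ωs j)) ∧
      Ω = Finset.univ.biUnion Ωs := by
  exact decomp_aux d Ω.card Ω rfl h.2.1 h.2.2.2

end ClutterPaper
end

section
/- Let C be a nonempty d-clutter on a finite vertex set V. The simplicial complex ⟨C⟩ is d-chorded if and only if for every d-cycle Ω all of whose d-faces are circuits of C, the set of facets of Ω is the symmetric difference of a finite family of complete subclutters of C, each consisting of all (d+1)-subsets of some (d+2)-element subset of V(Ω). -/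
namespace ClutterPaper

variable {α : Type*} [DecidableEq α]

/-! ### Auxiliary lemmas -/

section Aux

lemma mem_vertexSet_iff {v : α} {Ω : Finset (Finset α)} :
    v ∈ vertexSet Ω ↔ ∃ F ∈ Ω, v ∈ F := by simp [vertexSet]

lemma subset_vertexSet {F : Finset α} {Ω : Finset (Finset α)} (h : F ∈ Ω) :
    F ⊆ vertexSet Ω := fun v hv => mem_vertexSet_iff.2 ⟨F, h, hv⟩

lemma vertexSet_mono {A B : Finset (Finset α)} (h : A ⊆ B) :
    vertexSet A ⊆ vertexSet B := by
  intro v hv; rw [mem_vertexSet_iff] at *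
  obtain ⟨F, hF, hvF⟩ := hv; exact ⟨F, h hF, hvF⟩

lemma vertexSet_powersetCard (W : Finset α) (c : ℕ) (hc : 1 ≤ c) (h : c ≤ W.card) :
    vertexSet (W.powersetCard c) = W := by
  apply Finset.Subset.antisymm
  · intro v hv
    rw [mem_vertexSet_iff] at hv
    obtain ⟨F, hF, hvF⟩ := hv
    exact (Finset.mem_powersetCard.1 hF).1 hvF
  · intro v hv
    obtain ⟨F, hF, hFc⟩ := Finset.exists_subset_card_eq (show c - 1 ≤ (W.erase v).card by
      rw [Finset.card_erase_of_mem hv]; omega)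
    refine mem_vertexSet_iff.2 ⟨insert v F,
      Finset.mem_powersetCard.2 ⟨?_, ?_⟩, Finset.mem_insert_self _ _⟩
    · exact Finset.insert_subset hv (hF.trans (Finset.erase_subset _ _))
    · rw [Finset.card_insert_of_notMem (fun hvF => (Finset.mem_erase.1 (hF hvF)).1 rfl), hFc]
      omega

lemma boundary_filter_eq (d : ℕ) (W : Finset α) (hW : W.card = d + 2)
    {e : Finset α} (he : e.card = d) (heW : e ⊆ W) :
    (W.powersetCard (d+1)).filter (fun F => e ⊆ F) = (W \ e).image (fun u => insert u e) := by
  ext F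
  simp only [Finset.mem_filter, Finset.mem_powersetCard, Finset.mem_image, Finset.mem_sdiff]
  constructor
  · rintro ⟨⟨hFW, hFc⟩, heF⟩
    have h1 : (F \ e).card = 1 := by rw [Finset.card_sdiff_of_subset heF]; omega
    obtain ⟨u, hu⟩ := Finset.card_eq_one.1 h1
    have huF : u ∈ F \ e := hu ▸ Finset.mem_singleton_self u
    refine ⟨u, ⟨hFW (Finset.mem_sdiff.1 huF).1, (Finset.mem_sdiff.1 huF).2⟩, ?_⟩
    apply Finset.Subset.antisymm
    · intro x hx
      rcases Finset.mem_insert.1 hx with h | h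
      · exact h ▸ (Finset.mem_sdiff.1 huF).1
      · exact heF h
    · intro x hx
      by_cases hxe : x ∈ e
      · exact Finset.mem_insert_of_mem hxe
      · have hx' : x ∈ F \ e := Finset.mem_sdiff.2 ⟨hx, hxe⟩
        rw [hu, Finset.mem_singleton] at hx'
        subst hx'
        exact Finset.mem_insert_self _ _
  · rintro ⟨u, ⟨huW, hue⟩, rfl⟩
    exact ⟨⟨Finset.insert_subset huW heW, by rw [Finset.card_insert_of_notMem hue, he]⟩,
      Finset.subset_insert _ _⟩

/-- The boundary of a `(d+1)`-simplex is a `d`-cycle. -/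
lemma isCycle_boundary (d : ℕ) (W : Finset α) (hW : W.card = d + 2) :
    IsCycle d (W.powersetCard (d+1)) := by
  refine ⟨?_, ?_, ?_, ?_⟩
  · obtain ⟨F, hF, hFc⟩ := Finset.exists_subset_card_eq (show d + 1 ≤ W.card by omega)
    exact ⟨F, Finset.mem_powersetCard.2 ⟨hF, hFc⟩⟩
  · intro F hF; exact (Finset.mem_powersetCard.1 hF).2
  · intro F hF G hG
    rcases eq_or_ne F G with rfl | hne
    · exact Relation.ReflTransGen.refl
    · refine Relation.ReflTransGen.single ⟨hF, hG, ?_⟩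
      have hFW := Finset.mem_powersetCard.1 hF
      have hGW := Finset.mem_powersetCard.1 hG
      have hsub : F ∩ G ⊆ F := Finset.inter_subset_left
      have hle : (F ∩ G).card ≤ d + 1 := hFW.2 ▸ Finset.card_le_card hsub
      have hunion : (F ∪ G).card ≤ d + 2 :=
        hW ▸ Finset.card_le_card (Finset.union_subset hFW.1 hGW.1)
      have hieq := Finset.card_inter_add_card_union F G
      have hne' : (F ∩ G).card ≠ d + 1 := by
        intro h
        have : F ∩ G = F := Finset.eq_of_subset_of_card_le hsub (by omega)
        have hFsubG : F ⊆ G := this ▸ Finset.inter_subset_right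
        exact hne (Finset.eq_of_subset_of_card_le hFsubG (by omega))
      omega
  · intro e he
    by_cases heW : e ⊆ W
    · have hinj : Set.InjOn (fun u => insert u e) ↑(W \ e) := by
        intro u hu v hv huv
        simp only at huv
        have h1 : u ∈ insert v e := huv ▸ Finset.mem_insert_self u e
        rcases Finset.mem_insert.1 h1 with h | h
        · exact h
        · exact absurd h (Finset.mem_sdiff.1 hu).2
      rw [boundary_filter_eq d W hW he heW, Finset.card_image_of_injOn hinj,
        Finset.card_sdiff_of_subset heW, hW, he]
      have h2 : d + 2 - d = 2 := by omega
      rw [h2]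
      exact even_two
    · have h0 : (Finset.powersetCard (d+1) W).filter (fun F => e ⊆ F) = ∅ := by
        rw [Finset.filter_eq_empty_iff]
        intro F hF heF
        exact heW (heF.trans (Finset.mem_powersetCard.1 hF).1)
      rw [h0, Finset.card_empty]
      exact Even.zero

/-- A `d`-cycle has at least `d+2` vertices. -/
lemma cycle_vertexSet_card (d : ℕ) (Ω : Finset (Finset α)) (h : IsCycle d Ω) :
    d + 2 ≤ (vertexSet Ω).card := by
  obtain ⟨⟨F, hF⟩, hcard, hconn, heven⟩ := h
  have hFV : F ⊆ vertexSet Ω := subset_vertexSet hF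
  have h1 : d + 1 ≤ (vertexSet Ω).card := hcard F hF ▸ Finset.card_le_card hFV
  by_contra hlt
  have hFc := hcard F hF
  have hVF : F = vertexSet Ω :=
    Finset.eq_of_subset_of_card_le hFV (by omega)
  have hsingle : Ω = {F} := by
    apply Finset.Subset.antisymm
    · intro G hG
      have hGF : G ⊆ F := hVF ▸ subset_vertexSet hG
      rw [Finset.mem_singleton]
      exact Finset.eq_of_subset_of_card_le hGF (by rw [hcard F hF, hcard G hG])
    · intro G hG; rw [Finset.mem_singleton] at hG; exact hG ▸ hF
  obtain ⟨e, he, hec⟩ := Finset.exists_subset_card_eq (show d ≤ F.card by omega)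
  have := heven e hec
  rw [hsingle] at this
  have hfe : ({F} : Finset (Finset α)).filter (fun G => e ⊆ G) = {F} := by
    rw [Finset.filter_eq_self]; intro G hG; rw [Finset.mem_singleton] at hG; exact hG ▸ he
  rw [hfe, Finset.card_singleton] at this
  exact (Nat.not_even_iff_odd.2 odd_one) this

/-- A `d`-cycle on `d+2` vertices is the full boundary of a simplex. -/
lemma cycle_small_complete (d : ℕ) (Ω : Finset (Finset α)) (h : IsCycle d Ω)
    (hV : (vertexSet Ω).card = d + 2) : Ω = (vertexSet Ω).powersetCard (d + 1) := by
  obtain ⟨⟨F₀, hF₀⟩, hcard, hconn, heven⟩ := h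
  set V := vertexSet Ω with hVdef
  have hface : ∀ F ∈ Ω, ∃ u ∈ V, F = V.erase u := by
    intro F hF
    have hFV : F ⊆ V := subset_vertexSet hF
    have h1 : (V \ F).card = 1 := by rw [Finset.card_sdiff_of_subset hFV, hV, hcard F hF]; omega
    obtain ⟨u, hu⟩ := Finset.card_eq_one.1 h1
    have huV : u ∈ V \ F := hu ▸ Finset.mem_singleton_self u
    refine ⟨u, (Finset.mem_sdiff.1 huV).1, ?_⟩
    apply Finset.Subset.antisymm
    · intro x hx
      exact Finset.mem_erase.2 ⟨fun hxu => (Finset.mem_sdiff.1 huV).2 (hxu ▸ hx), hFV hx⟩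
    · intro x hx
      obtain ⟨hxu, hxV⟩ := Finset.mem_erase.1 hx
      by_contra hxF
      have : x ∈ V \ F := Finset.mem_sdiff.2 ⟨hxV, hxF⟩
      rw [hu, Finset.mem_singleton] at this
      exact hxu this
  have hkey : ∀ u ∈ V, ∀ v ∈ V, V.erase u ∈ Ω → V.erase v ∈ Ω := by
    intro u hu v hv huΩ
    rcases eq_or_ne u v with rfl | huv
    · exact huΩ
    by_contra hvΩ
    set e := (V.erase u).erase v with hedef
    have hvV : v ∈ V.erase u := Finset.mem_erase.2 ⟨Ne.symm huv, hv⟩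
    have hec : e.card = d := by
      rw [hedef, Finset.card_erase_of_mem hvV, Finset.card_erase_of_mem hu, hV]; omega
    have := heven e hec
    have hfilt : Ω.filter (fun F => e ⊆ F) = {V.erase u} := by
      apply Finset.Subset.antisymm
      · intro F hF
        obtain ⟨hFΩ, heF⟩ := Finset.mem_filter.1 hF
        obtain ⟨w, hwV, rfl⟩ := hface F hFΩ
        rw [Finset.mem_singleton]
        have hwe : w ∉ e := fun hw => (Finset.mem_erase.1 (heF hw)).1 rfl
        have : w = v ∨ w = u := by
          by_contra hc
          push_neg at hc
          exact hwe (Finset.mem_erase.2 ⟨hc.1, Finset.mem_erase.2 ⟨hc.2, hwV⟩⟩)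
        rcases this with rfl | rfl
        · exact absurd hFΩ hvΩ
        · rfl
      · intro F hF
        rw [Finset.mem_singleton] at hF
        subst hF
        exact Finset.mem_filter.2 ⟨huΩ, Finset.erase_subset _ _⟩
    rw [hfilt, Finset.card_singleton] at this
    exact (Nat.not_even_iff_odd.2 odd_one) this
  obtain ⟨u₀, hu₀, hFeq⟩ := hface F₀ hF₀
  apply Finset.Subset.antisymm
  · intro F hF
    exact Finset.mem_powersetCard.2 ⟨subset_vertexSet hF, hcard F hF⟩
  · intro F hF
    obtain ⟨hFV, hFc⟩ := Finset.mem_powersetCard.1 hF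
    have h1 : (V \ F).card = 1 := by rw [Finset.card_sdiff_of_subset hFV, hV, hFc]; omega
    obtain ⟨u, hu⟩ := Finset.card_eq_one.1 h1
    have huV : u ∈ V \ F := hu ▸ Finset.mem_singleton_self u
    have hFerase : F = V.erase u := by
      apply Finset.Subset.antisymm
      · intro x hx
        exact Finset.mem_erase.2 ⟨fun hxu => (Finset.mem_sdiff.1 huV).2 (hxu ▸ hx), hFV hx⟩
      · intro x hx
        obtain ⟨hxu, hxV⟩ := Finset.mem_erase.1 hx
        by_contra hxF
        have : x ∈ V \ F := Finset.mem_sdiff.2 ⟨hxV, hxF⟩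
        rw [hu, Finset.mem_singleton] at this
        exact hxu this
    rw [hFerase]
    exact hkey u₀ hu₀ u (Finset.mem_sdiff.1 huV).1 (hFeq ▸ hF₀)

lemma countP_sum {β γ : Type*} (s : Finset β) (f : β → Multiset γ) (p : γ → Prop)
    [DecidablePred p] :
    (∑ b ∈ s, f b).countP p = ∑ b ∈ s, (f b).countP p := by
  classical
  induction s using Finset.induction_on with
  | empty => simp
  | insert _ _ h ih => rw [Finset.sum_insert h, Finset.sum_insert h, Multiset.countP_add, ih]

lemma filter_card_list {β : Type*} (L : List β) (p : β → Prop) [DecidablePred p] :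
    (Finset.univ.filter fun i : Fin L.length => p (L.get i)).card
      = L.countP (fun b => p b) := by
  induction L with
  | nil => simp
  | cons a t ih =>
    rw [List.countP_cons]
    by_cases ha : p a
    · have h1 : (Finset.univ.filter fun i : Fin (a :: t).length => p ((a :: t).get i)) =
          insert 0 ((Finset.univ.filter fun i : Fin t.length => p (t.get i)).image Fin.succ) := by
        ext i
        simp only [Finset.mem_filter, Finset.mem_univ, true_and, Finset.mem_insert,
          Finset.mem_image]
        constructor
        · intro hi
          rcases Fin.eq_zero_or_eq_succ i with rfl | ⟨j, rfl⟩
          · exact Or.inl rfl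
          · exact Or.inr ⟨j, by simpa using hi, rfl⟩
        · rintro (rfl | ⟨j, hj, rfl⟩)
          · exact ha
          · simpa using hj
      rw [h1, Finset.card_insert_of_notMem (by simp [Fin.succ_ne_zero]),
        Finset.card_image_of_injective _ (Fin.succ_injective _), ih]
      simp [ha]
    · have h1 : (Finset.univ.filter fun i : Fin (a :: t).length => p ((a :: t).get i)) =
          ((Finset.univ.filter fun i : Fin t.length => p (t.get i)).image Fin.succ) := by
        ext i
        simp only [Finset.mem_filter, Finset.mem_univ, true_and, Finset.mem_image]
        constructor
        · intro hi
          rcases Fin.eq_zero_or_eq_succ i with rfl | ⟨j, rfl⟩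
          · exact absurd hi ha
          · exact ⟨j, by simpa using hi, rfl⟩
        · rintro ⟨j, hj, rfl⟩
          simpa using hj
      rw [h1, Finset.card_image_of_injective _ (Fin.succ_injective _), ih]
      simp [ha]

/-- `Θ` is the mod-2 sum of boundaries of `(d+1)`-simplices with vertices in `S`,
all of whose faces are circuits of `C`. -/
def GoodIn (d : ℕ) (C : Finset (Finset α)) (S : Finset α) (Θ : Finset (Finset α)) : Prop :=
  ∃ M : Multiset (Finset α),
    (∀ W ∈ M, W ⊆ S ∧ W.card = d + 2 ∧ W.powersetCard (d + 1) ⊆ C) ∧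
    ∀ F : Finset α, F ∈ Θ ↔ Odd (M.countP fun W => F ∈ W.powersetCard (d + 1))

lemma GoodIn.mono {d : ℕ} {C : Finset (Finset α)} {S S' : Finset α} {Θ : Finset (Finset α)}
    (hS : S ⊆ S') (h : GoodIn d C S Θ) : GoodIn d C S' Θ := by
  obtain ⟨M, hM, hpar⟩ := h
  exact ⟨M, fun W hW => ⟨(hM W hW).1.trans hS, (hM W hW).2⟩, hpar⟩

lemma GoodIn.empty (d : ℕ) (C : Finset (Finset α)) (S : Finset α) :
    GoodIn d C S (∅ : Finset (Finset α)) :=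
  ⟨0, by simp, by simp [Nat.odd_iff]⟩

lemma GoodIn.union {d : ℕ} {C : Finset (Finset α)} {S : Finset α} {A B : Finset (Finset α)}
    (hdisj : Disjoint A B) (hA : GoodIn d C S A) (hB : GoodIn d C S B) :
    GoodIn d C S (A ∪ B) := by
  obtain ⟨M₁, hM₁, hpar₁⟩ := hA
  obtain ⟨M₂, hM₂, hpar₂⟩ := hB
  refine ⟨M₁ + M₂, ?_, ?_⟩
  · intro W hW
    rcases Multiset.mem_add.1 hW with h | h
    · exact hM₁ W h
    · exact hM₂ W h
  · intro F
    have h₁ := hpar₁ F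
    have h₂ := hpar₂ F
    have hboth : ¬(F ∈ A ∧ F ∈ B) := fun ⟨hFA, hFB⟩ =>
      Finset.disjoint_left.1 hdisj hFA hFB
    rw [Nat.odd_iff] at h₁ h₂ ⊢
    rw [Multiset.countP_add, Finset.mem_union]
    by_cases hFA : F ∈ A <;> by_cases hFB : F ∈ B
    · exact absurd ⟨hFA, hFB⟩ hboth
    · simp only [hFA, hFB, true_iff, false_iff] at h₁ h₂
      simp only [hFA, hFB, true_or]
      constructor
      · intro _; omega
      · intro _; trivial
    · simp only [hFA, hFB, false_iff, true_iff] at h₁ h₂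
      simp only [hFA, hFB, or_true]
      constructor
      · intro _; omega
      · intro _; trivial
    · simp only [hFA, hFB, false_iff] at h₁ h₂
      simp only [hFA, hFB, or_self, false_iff]
      omega

lemma GoodIn.of_family {d : ℕ} {C : Finset (Finset α)} {S : Finset α}
    {Ω : Finset (Finset α)} {k : ℕ} {Ωs : Fin k → Finset (Finset α)}
    (hG : ∀ i, GoodIn d C S (Ωs i))
    (hpar : ∀ F : Finset α,
      F ∈ Ω ↔ Odd ((Finset.univ.filter fun i => F ∈ Ωs i).card)) :
    GoodIn d C S Ω := by
  classical
  choose M hM hMpar using hG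
  refine ⟨∑ i, M i, ?_, ?_⟩
  · intro W hW
    rw [Multiset.mem_sum] at hW
    obtain ⟨i, _, hWi⟩ := hW
    exact hM i W hWi
  · intro F
    rw [hpar F, ← ZMod.natCast_eq_one_iff_odd, ← ZMod.natCast_eq_one_iff_odd, countP_sum]
    have hsum : ((∑ i, (M i).countP fun W => F ∈ W.powersetCard (d + 1) : ℕ) : ZMod 2)
        = ∑ i, (((M i).countP fun W => F ∈ W.powersetCard (d + 1) : ℕ) : ZMod 2) := by
      push_cast; ring
    have hcard : (((Finset.univ.filter fun i => F ∈ Ωs i).card : ℕ) : ZMod 2)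
        = ∑ i : Fin k, (if F ∈ Ωs i then (1 : ZMod 2) else 0) := by
      rw [Finset.card_filter]
      push_cast
      apply Finset.sum_congr rfl
      intro i _
      split <;> simp
    rw [hsum, hcard]
    have : ∀ i : Fin k, (((M i).countP fun W => F ∈ W.powersetCard (d + 1) : ℕ) : ZMod 2)
        = (if F ∈ Ωs i then (1 : ZMod 2) else 0) := by
      intro i
      by_cases h : F ∈ Ωs i
      · simp only [h, if_true]
        exact ZMod.natCast_eq_one_iff_odd.2 ((hMpar i F).1 h)
      · simp only [h, if_false]
        rw [ZMod.natCast_eq_zero_iff_even, ← Nat.not_odd_iff_even]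
        exact fun ho => h ((hMpar i F).2 ho)
    rw [Finset.sum_congr rfl (fun i _ => this i)]

/-- An even chain: all faces have size `d+1` and every `d`-face lies in evenly many faces. -/
def EvenChain (d : ℕ) (Θ : Finset (Finset α)) : Prop :=
  (∀ F ∈ Θ, F.card = d + 1) ∧
    ∀ e : Finset α, e.card = d → Even ((Θ.filter fun F => e ⊆ F).card)

lemma EvenChain.of_isCycle {d : ℕ} {Ω : Finset (Finset α)} (h : IsCycle d Ω) :
    EvenChain d Ω := ⟨h.2.1, h.2.2.2⟩

lemma adj_of_common {d : ℕ} {Θ : Finset (Finset α)} (hcard : ∀ F ∈ Θ, F.card = d + 1)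
    {e A B : Finset α} (he : e.card = d) (hA : A ∈ Θ) (hB : B ∈ Θ)
    (heA : e ⊆ A) (heB : e ⊆ B) : A = B ∨ (A ∩ B).card = d := by
  have h1 : e ⊆ A ∩ B := Finset.subset_inter heA heB
  have h2 : d ≤ (A ∩ B).card := he ▸ Finset.card_le_card h1
  have h3 : (A ∩ B).card ≤ d + 1 := (hcard A hA) ▸ Finset.card_le_card Finset.inter_subset_left
  rcases Nat.eq_or_lt_of_le h2 with h | h
  · exact Or.inr h.symm
  · left
    have h4 : (A ∩ B).card = d + 1 := by omega
    have h5 : A ∩ B = A := Finset.eq_of_subset_of_card_le Finset.inter_subset_left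
      (by rw [h4, hcard A hA])
    have h6 : A ⊆ B := h5 ▸ Finset.inter_subset_right
    exact Finset.eq_of_subset_of_card_le h6 (by rw [hcard A hA, hcard B hB])

/-- A nonempty even chain contains a cycle (the connected component of any face). -/
lemma component_cycle {d : ℕ} {Θ : Finset (Finset α)} (hE : EvenChain d Θ)
    {F : Finset α} (hF : F ∈ Θ) :
    ∃ Ω₁ ⊆ Θ, Ω₁.Nonempty ∧ IsCycle d Ω₁ := by
  classical
  obtain ⟨hcard, heven⟩ := hE
  set adj : Finset α → Finset α → Prop := fun A B => A ∈ Θ ∧ B ∈ Θ ∧ (A ∩ B).card = d with hadj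
  set Ω₁ : Finset (Finset α) := Θ.filter (fun G => Relation.ReflTransGen adj F G) with hΩ₁
  have hsub : Ω₁ ⊆ Θ := Finset.filter_subset _ _
  have hFΩ₁ : F ∈ Ω₁ := Finset.mem_filter.2 ⟨hF, Relation.ReflTransGen.refl⟩
  have hreach : ∀ G, Relation.ReflTransGen adj F G →
      Relation.ReflTransGen (fun A B => A ∈ Ω₁ ∧ B ∈ Ω₁ ∧ (A ∩ B).card = d) F G := by
    intro G hG
    induction hG with
    | refl => exact Relation.ReflTransGen.refl
    | tail hab hbc ih =>
      rename_i b c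
      have hbΩ : b ∈ Ω₁ := Finset.mem_filter.2 ⟨hbc.1, hab⟩
      have hcΩ : c ∈ Ω₁ := Finset.mem_filter.2 ⟨hbc.2.1, hab.tail hbc⟩
      exact ih.tail ⟨hbΩ, hcΩ, hbc.2.2⟩
  have hmemreach : ∀ G ∈ Ω₁, Relation.ReflTransGen adj F G := fun G hG =>
    (Finset.mem_filter.1 hG).2
  have hsymm : Symmetric fun A B => A ∈ Ω₁ ∧ B ∈ Ω₁ ∧ (A ∩ B).card = d := by
    intro A B ⟨h1, h2, h3⟩
    exact ⟨h2, h1, by rwa [Finset.inter_comm]⟩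
  have hfilter : ∀ e : Finset α, e.card = d →
      (Ω₁.filter fun G => e ⊆ G) = ∅ ∨
      (Ω₁.filter fun G => e ⊆ G) = (Θ.filter fun G => e ⊆ G) := by
    intro e he
    by_cases hne : (Ω₁.filter fun G => e ⊆ G).Nonempty
    · right
      obtain ⟨G₀, hG₀⟩ := hne
      obtain ⟨hG₀Ω, heG₀⟩ := Finset.mem_filter.1 hG₀
      apply Finset.Subset.antisymm
      · exact Finset.filter_subset_filter _ hsub
      · intro H hH
        obtain ⟨hHΘ, heH⟩ := Finset.mem_filter.1 hH
        refine Finset.mem_filter.2 ⟨?_, heH⟩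
        rcases adj_of_common hcard he (hsub hG₀Ω) hHΘ heG₀ heH with rfl | hadjGH
        · exact hG₀Ω
        · exact Finset.mem_filter.2 ⟨hHΘ,
            (hmemreach G₀ hG₀Ω).tail ⟨hsub hG₀Ω, hHΘ, hadjGH⟩⟩
    · left
      rwa [Finset.not_nonempty_iff_eq_empty] at hne
  refine ⟨Ω₁, hsub, ⟨F, hFΩ₁⟩, ⟨F, hFΩ₁⟩, fun G hG => hcard G (hsub hG), ?_, ?_⟩
  · intro G hG H hH
    have h1 := hreach G (hmemreach G hG)
    have h2 := hreach H (hmemreach H hH)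
    exact ((@Relation.ReflTransGen.stdSymm _ _ ⟨fun a b h => hsymm h⟩).symm _ _ h1).trans h2
  · intro e he
    rcases hfilter e he with h | h
    · rw [h]; simp
    · rw [h]; exact heven e he

lemma EvenChain.sdiff {d : ℕ} {Θ Ω : Finset (Finset α)} (hE : EvenChain d Θ)
    (hΩ : EvenChain d Ω) (hsub : Ω ⊆ Θ) : EvenChain d (Θ \ Ω) := by
  refine ⟨fun F hF => hE.1 F (Finset.mem_sdiff.1 hF).1, ?_⟩
  intro e he
  have h1 : (Θ \ Ω).filter (fun F => e ⊆ F) =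
      (Θ.filter fun F => e ⊆ F) \ (Ω.filter fun F => e ⊆ F) := by
    ext F
    simp only [Finset.mem_filter, Finset.mem_sdiff]
    tauto
  rw [h1, Finset.card_sdiff_of_subset (Finset.filter_subset_filter _ hsub)]
  have h2 := hE.2 e he
  have h3 := hΩ.2 e he
  have h4 : ((Ω.filter fun F => e ⊆ F)).card ≤ ((Θ.filter fun F => e ⊆ F)).card :=
    Finset.card_le_card (Finset.filter_subset_filter _ hsub)
  rw [Nat.even_iff] at h2 h3 ⊢
  omega

/-- Every cycle contains a face-minimal cycle. -/
lemma exists_faceMinimal {d : ℕ} :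
    ∀ Ω : Finset (Finset α), IsCycle d Ω → ∃ Ω₀ ⊆ Ω, FaceMinimalCycle d Ω₀ := by
  intro Ω
  induction Ω using Finset.strongInduction with
  | _ Ω ih =>
    intro hΩ
    by_cases h : ∀ Ω' : Finset (Finset α), IsCycle d Ω' → Ω' ⊆ Ω → Ω' = Ω
    · exact ⟨Ω, Finset.Subset.refl _, hΩ, h⟩
    · push_neg at h
      obtain ⟨Ω', hΩ', hsub, hne⟩ := h
      obtain ⟨Ω₀, h1, h2⟩ := ih Ω' (Finset.ssubset_iff_subset_ne.2 ⟨hsub, hne⟩) hΩ'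
      exact ⟨Ω₀, h1.trans hsub, h2⟩

/-- Main induction: in a `d`-chorded clutter, every even chain is a mod-2 sum of
simplex boundaries. -/
lemma goodIn_of_chorded {d : ℕ} {C : Finset (Finset α)} (hch : Chorded d C) :
    ∀ n : ℕ, ∀ Θ : Finset (Finset α), Θ ⊆ C → EvenChain d Θ →
      (vertexSet Θ).card ≤ n → GoodIn d C (vertexSet Θ) Θ := by
  intro n
  induction n using Nat.strong_induction_on with
  | _ n IHn =>
  intro Θ
  induction Θ using Finset.strongInduction with
  | _ Θ IHΘ =>
  intro hΘC hE hVn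
  rcases Finset.eq_empty_or_nonempty Θ with rfl | ⟨F, hF⟩
  · exact GoodIn.empty d C _
  obtain ⟨Ω₁, hΩ₁Θ, hΩ₁ne, hΩ₁cyc⟩ := component_cycle hE hF
  obtain ⟨Ω₀, hΩ₀Ω₁, hΩ₀min⟩ := exists_faceMinimal Ω₁ hΩ₁cyc
  have hΩ₀cyc : IsCycle d Ω₀ := hΩ₀min.1
  have hΩ₀Θ : Ω₀ ⊆ Θ := hΩ₀Ω₁.trans hΩ₁Θ
  have hΩ₀C : Ω₀ ⊆ C := hΩ₀Θ.trans hΘC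
  have hΩ₀ne : Ω₀.Nonempty := hΩ₀cyc.1
  have hVΩ₀ : vertexSet Ω₀ ⊆ vertexSet Θ := vertexSet_mono hΩ₀Θ
  -- Step 1: GoodIn for the face-minimal cycle Ω₀
  have hgood₀ : GoodIn d C (vertexSet Θ) Ω₀ := by
    by_cases hcomp : DComplete d Ω₀
    · -- complete case: Ω₀ is the boundary of a simplex
      obtain ⟨W, hWsub, hWc⟩ :=
        Finset.exists_subset_card_eq (cycle_vertexSet_card d Ω₀ hΩ₀cyc)
      have hBsub : W.powersetCard (d+1) ⊆ Ω₀ := by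
        intro G hG
        obtain ⟨hGW, hGc⟩ := Finset.mem_powersetCard.1 hG
        exact hcomp G (hGW.trans hWsub) hGc
      have hBcyc : IsCycle d (W.powersetCard (d+1)) := isCycle_boundary d W hWc
      have hBeq : W.powersetCard (d+1) = Ω₀ := hΩ₀min.2 _ hBcyc hBsub
      refine ⟨{W}, ?_, ?_⟩
      · intro W' hW'
        rw [Multiset.mem_singleton] at hW'
        subst hW'
        exact ⟨hWsub.trans hVΩ₀, hWc, hBeq ▸ hΩ₀C⟩
      · intro G
        rw [← hBeq]
        have hcnt : Multiset.countP (fun W' => G ∈ W'.powersetCard (d+1)) {W}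
            = if G ∈ W.powersetCard (d+1) then 1 else 0 := by
          show Multiset.countP _ (W ::ₘ 0) = _
          rw [Multiset.countP_cons, Multiset.countP_zero, Nat.zero_add]
        rw [hcnt]
        by_cases hG : G ∈ W.powersetCard (d+1) <;> simp [hG, Nat.odd_iff]
    · -- incomplete case: use chordedness and induct on vertices
      obtain ⟨k, Ωs, hk2, hcyc, hcover, hodd, heven', hVss⟩ :=
        hch Ω₀ hΩ₀min hΩ₀C hcomp
      have hGi : ∀ i, GoodIn d C (vertexSet Θ) (Ωs i) := by
        intro i
        have hlt : (vertexSet (Ωs i)).card < (vertexSet Ω₀).card :=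
          Finset.card_lt_card (hVss i)
        have hle : (vertexSet Ω₀).card ≤ n :=
          le_trans (Finset.card_le_card hVΩ₀) hVn
        have := IHn (vertexSet (Ωs i)).card (by omega) (Ωs i) (hcyc i).2
          (EvenChain.of_isCycle (hcyc i).1) le_rfl
        exact this.mono ((hVss i).subset.trans hVΩ₀)
      refine GoodIn.of_family hGi ?_
      intro G
      constructor
      · exact hodd G
      · intro hoddG
        by_contra hGΩ₀
        by_cases hex : ∃ i, G ∈ Ωs i
        · exact (Nat.not_odd_iff_even.2 (heven' G hex hGΩ₀)) hoddG
        · push_neg at hex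
          have : (Finset.univ.filter fun i => G ∈ Ωs i) = ∅ := by
            rw [Finset.filter_eq_empty_iff]
            intro i _
            exact hex i
          rw [this, Finset.card_empty] at hoddG
          exact (Nat.not_odd_iff_even.2 Even.zero) hoddG
  -- Step 2: induct on the rest
  have hrest : EvenChain d (Θ \ Ω₀) := hE.sdiff (EvenChain.of_isCycle hΩ₀cyc) hΩ₀Θ
  have hss : Θ \ Ω₀ ⊂ Θ := by
    refine Finset.ssubset_iff_subset_ne.2 ⟨Finset.sdiff_subset, ?_⟩
    intro h
    obtain ⟨G, hG⟩ := hΩ₀ne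
    have : G ∈ Θ \ Ω₀ := by rw [h]; exact hΩ₀Θ hG
    exact (Finset.mem_sdiff.1 this).2 hG
  have hgood₁ : GoodIn d C (vertexSet Θ) (Θ \ Ω₀) := by
    have := IHΘ (Θ \ Ω₀) hss (Finset.sdiff_subset.trans hΘC) hrest
      (le_trans (Finset.card_le_card (vertexSet_mono Finset.sdiff_subset)) hVn)
    exact this.mono (vertexSet_mono Finset.sdiff_subset)
  have hunion : Ω₀ ∪ (Θ \ Ω₀) = Θ := Finset.union_sdiff_of_subset hΩ₀Θ
  have := GoodIn.union (Finset.disjoint_sdiff) hgood₀ hgood₁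
  rwa [hunion] at this

end Aux

/-- For a nonempty `d`-clutter `C`, the complex `⟨C⟩` is `d`-chorded iff for
every `d`-cycle `Ω` with all `d`-faces in `C`, `Facets(Ω)` is the symmetric difference of a
family of complete subclutters of `C`, each consisting of all `(d+1)`-subsets of some
`(d+2)`-element subset of `V(Ω)`. -/
theorem chorded_iff_cycles_symmDiff (V : Finset α) (d : ℕ) (C : Finset (Finset α))
    (hC : IsClutter V (d + 1) C) (hne : C.Nonempty) :
    Chorded d C ↔
      ∀ Ω : Finset (Finset α), IsCycle d Ω → Ω ⊆ C →
        ∃ (k : ℕ) (W : Fin k → Finset α),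
          (∀ i, W i ⊆ vertexSet Ω ∧ (W i).card = d + 2 ∧
            (W i).powersetCard (d + 1) ⊆ C) ∧
          ∀ F : Finset α,
            F ∈ Ω ↔
              Odd ((Finset.univ.filter fun i => F ∈ (W i).powersetCard (d + 1)).card) := by
  classical
  constructor
  · -- forward direction
    intro hch Ω hΩ hΩC
    have hgood : GoodIn d C (vertexSet Ω) Ω :=
      goodIn_of_chorded hch (vertexSet Ω).card Ω hΩC (EvenChain.of_isCycle hΩ) le_rfl
    obtain ⟨M, hM, hpar⟩ := hgood
    refine ⟨M.toList.length, fun i => M.toList.get i, ?_, ?_⟩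
    · intro i
      exact hM _ (Multiset.mem_toList.1 (M.toList.get_mem _))
    · intro F
      rw [hpar F, filter_card_list M.toList (fun W => F ∈ W.powersetCard (d+1)),
        ← Multiset.coe_countP, Multiset.coe_toList]
  · -- reverse direction
    intro hyp Ω hΩmin hΩC hncomp
    obtain ⟨k, W, hW, hpar⟩ := hyp Ω hΩmin.1 hΩC
    have hΩne : Ω.Nonempty := hΩmin.1.1
    -- k = 0 impossible
    have hk0 : k ≠ 0 := by
      rintro rfl
      obtain ⟨F, hF⟩ := hΩne
      have := (hpar F).1 hF
      have h0 : (Finset.univ.filter fun i : Fin 0 => F ∈ (W i).powersetCard (d+1)) = ∅ := by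
        apply Finset.eq_empty_of_forall_notMem
        intro i
        exact absurd (Finset.mem_univ i) (by exact fun _ => i.elim0)
      rw [h0, Finset.card_empty] at this
      exact (Nat.not_odd_iff_even.2 Even.zero) this
    -- Ω is not all of one simplex boundary (else complete)
    have hnotall : ∀ S : Finset α, S.card = d + 2 → vertexSet Ω ≠ S := by
      intro S hS hVS
      have hcomp : DComplete d Ω := by
        have heq := cycle_small_complete d Ω hΩmin.1 (by rw [hVS, hS])
        intro F hFV hFc
        rw [heq]
        exact Finset.mem_powersetCard.2 ⟨hFV, hFc⟩
      exact hncomp hcomp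
    -- k = 1 impossible
    have hk1 : k ≠ 1 := by
      rintro rfl
      have hΩeq : Ω = (W 0).powersetCard (d+1) := by
        ext F
        rw [hpar F]
        have huniv : (Finset.univ : Finset (Fin 1)) = {0} := by
          apply Finset.eq_singleton_iff_unique_mem.2
          exact ⟨Finset.mem_univ _, fun i _ => Subsingleton.elim i 0⟩
        by_cases hF : F ∈ (W 0).powersetCard (d+1)
        · have : (Finset.univ.filter fun i : Fin 1 => F ∈ (W i).powersetCard (d+1)) = {0} := by
            rw [huniv]
            rw [Finset.filter_eq_self]
            intro i hi
            rw [Finset.mem_singleton] at hi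
            subst hi
            exact hF
          rw [this, Finset.card_singleton]
          simp [hF, Nat.odd_iff]
        · have : (Finset.univ.filter fun i : Fin 1 => F ∈ (W i).powersetCard (d+1)) = ∅ := by
            rw [Finset.filter_eq_empty_iff]
            intro i _
            have : i = 0 := Subsingleton.elim i 0
            subst this
            exact hF
          rw [this, Finset.card_empty]
          simp [hF, Nat.odd_iff]
      have hVΩ : vertexSet Ω = W 0 := by
        rw [hΩeq]
        exact vertexSet_powersetCard (W 0) (d+1) (by omega) (by rw [(hW 0).2.1]; omega)
      exact hnotall (W 0) (hW 0).2.1 hVΩ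
    refine ⟨k, fun i => (W i).powersetCard (d+1), by omega, ?_, ?_, ?_, ?_, ?_⟩
    · intro i
      exact ⟨isCycle_boundary d (W i) (hW i).2.1, (hW i).2.2⟩
    · intro F hF
      have hoddF := (hpar F).1 hF
      have hne : (Finset.univ.filter fun i => F ∈ (W i).powersetCard (d+1)).Nonempty := by
        rw [Finset.nonempty_iff_ne_empty]
        intro h
        rw [h, Finset.card_empty] at hoddF
        exact (Nat.not_odd_iff_even.2 Even.zero) hoddF
      obtain ⟨i, hi⟩ := hne
      exact ⟨i, (Finset.mem_filter.1 hi).2⟩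
    · intro F hF
      exact (hpar F).1 hF
    · intro F _ hFΩ
      rw [← Nat.not_odd_iff_even]
      exact fun h => hFΩ ((hpar F).2 h)
    · intro i
      have hveq : vertexSet ((W i).powersetCard (d+1)) = W i :=
        vertexSet_powersetCard (W i) (d+1) (by omega) (by rw [(hW i).2.1]; omega)
      rw [hveq]
      refine Finset.ssubset_iff_subset_ne.2 ⟨(hW i).1, ?_⟩
      intro h
      exact hnotall (W i) (hW i).2.1 h.symm

end ClutterPaper
end

section
/- Let C be a chordal graph, regarded as a 1-dimensional uniform clutter, and let F be a simplicial edge of C, that is, F ∈ SMS(C^+) where C^+ is the 2-clutter of 3-element cliques (triangles) of C. Then the graph C − F = C \ {F} is chordal. -/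
namespace ClutterPaper

variable {α : Type*} [DecidableEq α]

/-! ### helpers -/

lemma mem_delMS {C : Finset (Finset α)} {v : α} {e : Finset α} :
    e ∈ delMS C {v} ↔ e ∈ C ∧ v ∉ e := by
  simp [delMS, Finset.singleton_subset_iff]

lemma mem_closedNbhd {V : Finset α} {C : Finset (Finset α)} {e : Finset α} {x : α} :
    x ∈ closedNbhd V C e ↔ x ∈ e ∨ (x ∈ V ∧ insert x e ∈ C) := by
  simp [closedNbhd]

lemma closedNbhd_mono {V : Finset α} {C₁ C₂ : Finset (Finset α)} {e : Finset α}
    (h : C₁ ⊆ C₂) : closedNbhd V C₁ e ⊆ closedNbhd V C₂ e := by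
  intro x hx
  rcases mem_closedNbhd.mp hx with h1 | ⟨h1, h2⟩
  · exact mem_closedNbhd.mpr (Or.inl h1)
  · exact mem_closedNbhd.mpr (Or.inr ⟨h1, h h2⟩)

lemma mem_ascent2 {V : Finset α} {C : Finset (Finset α)} {A : Finset α} :
    A ∈ ascent V 2 C ↔ A ⊆ V ∧ A.card = 3 ∧ ∀ P ⊆ A, P.card = 2 → P ∈ C := by
  constructor
  · intro h
    obtain ⟨h1, h2⟩ := Finset.mem_filter.mp h
    obtain ⟨h3, h4⟩ := Finset.mem_powersetCard.mp h1
    exact ⟨h3, h4, fun P hP hPc => h2 (Finset.mem_powersetCard.mpr ⟨hP, hPc⟩)⟩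
  · rintro ⟨h1, h2, h3⟩
    refine Finset.mem_filter.mpr ⟨Finset.mem_powersetCard.mpr ⟨h1, h2⟩, fun P hP => ?_⟩
    obtain ⟨h4, h5⟩ := Finset.mem_powersetCard.mp hP
    exact h3 P h4 h5

lemma eq_pair_of_mem {e : Finset α} {u : α} (hu : u ∈ e) (hc : e.card = 2) :
    ∃ x, x ≠ u ∧ e = {u, x} := by
  obtain ⟨c, d, hcd, rfl⟩ := Finset.card_eq_two.mp hc
  rcases Finset.mem_insert.mp hu with rfl | hu'
  · exact ⟨d, Ne.symm hcd, rfl⟩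
  · obtain rfl := Finset.mem_singleton.mp hu'
    exact ⟨c, hcd, Finset.pair_comm c u⟩

lemma notMem_pair {x a b : α} (h1 : x ≠ a) (h2 : x ≠ b) : x ∉ ({a, b} : Finset α) := by
  simp [h1, h2]

lemma pair_subset_triple {x y z : α} {P : Finset α} (h : P ⊆ ({x, y, z} : Finset α))
    (hc : P.card = 2) : P = {x, y} ∨ P = {x, z} ∨ P = {y, z} := by
  obtain ⟨c, d, hcd, rfl⟩ := Finset.card_eq_two.mp hc
  have hcm : c = x ∨ c = y ∨ c = z := by
    have := h (Finset.mem_insert_self c {d}); simpa using this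
  have hdm : d = x ∨ d = y ∨ d = z := by
    have := h (by simp : d ∈ ({c, d} : Finset α)); simpa using this
  rcases hcm with rfl | rfl | rfl <;> rcases hdm with rfl | rfl | rfl <;>
    first
      | exact absurd rfl hcd
      | exact Or.inl rfl
      | exact Or.inl (Finset.pair_comm _ _)
      | exact Or.inr (Or.inl rfl)
      | exact Or.inr (Or.inl (Finset.pair_comm _ _))
      | exact Or.inr (Or.inr rfl)
      | exact Or.inr (Or.inr (Finset.pair_comm _ _))


/-- If the head vertex `v` of the elimination lies in the edge `F`, then `C.erase F`
is chordal. -/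
lemma erase_of_head_mem {V : Finset α} {C : Finset (Finset α)} {v : α}
    (hSMS : IsSMS V 2 C {v}) (hnext : Chordal V 2 (delMS C {v}))
    {F : Finset α} (hvF : v ∈ F) (hF2 : F.card = 2) :
    Chordal V 2 (C.erase F) := by
  by_cases hex : ∃ e ∈ C, v ∈ e ∧ e ≠ F
  · obtain ⟨e₀, he₀, hve₀, hne₀⟩ := hex
    have hvV : v ∈ V := hSMS.2.1 (mem_closedNbhd.mpr (Or.inl (Finset.mem_singleton_self v)))
    have hsms : IsSMS V 2 (C.erase F) {v} := by
      refine ⟨⟨by simp, e₀, Finset.mem_erase.mpr ⟨hne₀, he₀⟩,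
        Finset.singleton_subset_iff.mpr hve₀⟩, ?_, ?_⟩
      · intro x hx
        rcases mem_closedNbhd.mp hx with h1 | ⟨h1, _⟩
        · obtain rfl := Finset.mem_singleton.mp h1; exact hvV
        · exact h1
      · intro P hP hP2
        have hPC : P ∈ C := hSMS.2.2 P (hP.trans (closedNbhd_mono (Finset.erase_subset F C))) hP2
        refine Finset.mem_erase.mpr ⟨?_, hPC⟩
        rintro rfl
        obtain ⟨w, hwv, hPw⟩ := eq_pair_of_mem hvF hF2
        have hwP : w ∈ P := by rw [hPw]; simp
        have hwN := hP hwP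
        rcases mem_closedNbhd.mp hwN with h1 | ⟨_, h2⟩
        · exact hwv (Finset.mem_singleton.mp h1)
        · have heq : insert w ({v} : Finset α) = P := (Finset.pair_comm w v).trans hPw.symm
          rw [heq] at h2
          exact (Finset.mem_erase.mp h2).1 rfl
    have hdel : delMS (C.erase F) {v} = delMS C {v} := by
      ext e
      simp only [mem_delMS, Finset.mem_erase]
      constructor
      · rintro ⟨⟨_, h1⟩, h2⟩; exact ⟨h1, h2⟩
      · rintro ⟨h1, h2⟩
        exact ⟨⟨fun h => h2 (by rw [h]; exact hvF), h1⟩, h2⟩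
    exact Chordal.step {v} hsms (hdel ▸ hnext)
  · push_neg at hex
    have heq : C.erase F = delMS C {v} := by
      ext e
      simp only [Finset.mem_erase, mem_delMS]
      constructor
      · rintro ⟨h1, h2⟩
        exact ⟨h2, fun hv => h1 (hex e h2 hv)⟩
      · rintro ⟨h1, h2⟩
        exact ⟨fun h => h2 (by rw [h]; exact hvF), h1⟩
    rw [heq]; exact hnext

/-- Erasing an edge contained in no triangle preserves chordality. -/
lemma chordal_erase_no_triangle {V : Finset α} {C : Finset (Finset α)} (h : Chordal V 2 C) :
    ∀ a b : α, a ≠ b → ({a, b} : Finset α) ∈ C →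
      (∀ w, ({w, a} : Finset α) ∈ C → ({w, b} : Finset α) ∈ C → False) →
      Chordal V 2 (C.erase {a, b}) := by
  induction h with
  | empty => intro a b _ hab _; exact absurd hab (Finset.notMem_empty _)
  | @step C e hSMS hnext ih =>
    intro a b hne hab hT
    have he1 : e.card = 1 := by have := hSMS.1.1; omega
    obtain ⟨v, rfl⟩ := Finset.card_eq_one.mp he1
    by_cases hvF : v ∈ ({a, b} : Finset α)
    · exact erase_of_head_mem hSMS hnext hvF (Finset.card_pair hne)
    · have hva : v ≠ a := fun h' => hvF (by rw [h']; simp)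
      have hvb : v ≠ b := fun h' => hvF (by rw [h']; simp)
      have hvV : v ∈ V := hSMS.2.1 (mem_closedNbhd.mpr (Or.inl (by simp)))
      obtain ⟨_, e₀, he₀, hve₀⟩ := hSMS.1
      have hsms : IsSMS V 2 (C.erase {a, b}) {v} := by
        refine ⟨⟨by simp, e₀, Finset.mem_erase.mpr ⟨?_, he₀⟩, hve₀⟩, ?_, ?_⟩
        · rintro rfl; exact hvF (Finset.singleton_subset_iff.mp hve₀)
        · intro x hx
          rcases mem_closedNbhd.mp hx with h1 | ⟨h1, _⟩
          · obtain rfl := Finset.mem_singleton.mp h1; exact hvV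
          · exact h1
        · intro P hP hP2
          have hPC : P ∈ C := hSMS.2.2 P
            (hP.trans (closedNbhd_mono (Finset.erase_subset _ _))) hP2
          refine Finset.mem_erase.mpr ⟨?_, hPC⟩
          rintro rfl
          have haN := hP (Finset.mem_insert_self a {b})
          have hbN := hP (by simp : b ∈ ({a, b} : Finset α))
          have haC : ({v, a} : Finset α) ∈ C := by
            rcases mem_closedNbhd.mp haN with h1 | ⟨_, h2⟩
            · exact absurd (Finset.mem_singleton.mp h1).symm hva
            · have := (Finset.mem_erase.mp h2).2
              rw [Finset.pair_comm]; exact this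
          have hbC : ({v, b} : Finset α) ∈ C := by
            rcases mem_closedNbhd.mp hbN with h1 | ⟨_, h2⟩
            · exact absurd (Finset.mem_singleton.mp h1).symm hvb
            · have := (Finset.mem_erase.mp h2).2
              rw [Finset.pair_comm]; exact this
          exact hT v haC hbC
      have hdel : delMS (C.erase {a, b}) {v} = (delMS C {v}).erase {a, b} := by
        ext e'
        simp only [mem_delMS, Finset.mem_erase]
        tauto
      have hrec := ih a b hne (mem_delMS.mpr ⟨hab, hvF⟩)
        (fun w h1 h2 => hT w (mem_delMS.mp h1).1 (mem_delMS.mp h2).1)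
      exact Chordal.step {v} hsms (hdel ▸ hrec)


/-- Attaching a fresh set `U`, completely joined to itself and to a clique `A`,
preserves chordality. -/
lemma chordal_union_clique {V : Finset α} (U : Finset α) :
    ∀ (H : Finset (Finset α)) (A : Finset α), U ⊆ V → A ⊆ V → (∀ x ∈ U, x ∉ A) →
      Chordal V 2 H → (∀ e ∈ H, ∀ x ∈ U, x ∉ e) → (∀ P ⊆ A, P.card = 2 → P ∈ H) →
      Chordal V 2 (H ∪ (U ∪ A).powersetCard 2) := by
  induction U using Finset.induction_on with
  | empty =>
    intro H A _ _ _ hH _ hA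
    rw [Finset.empty_union, Finset.union_eq_left.mpr]
    · exact hH
    · intro P hP
      obtain ⟨h2, h3⟩ := Finset.mem_powersetCard.mp hP
      exact hA P h2 h3
  | @insert u U huU ihU =>
    intro H A hUV hAV hdisj hH hfresh hA
    have huV : u ∈ V := hUV (Finset.mem_insert_self u U)
    have huA : u ∉ A := hdisj u (Finset.mem_insert_self u U)
    have hU'V : U ⊆ V := fun x hx => hUV (Finset.mem_insert_of_mem hx)
    have hins : insert u U ∪ A = insert u (U ∪ A) := Finset.insert_union u U A
    by_cases hne : (U ∪ A).Nonempty
    · obtain ⟨x₀, hx₀⟩ := hne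
      have hx₀u : x₀ ≠ u := by
        rintro rfl
        rcases Finset.mem_union.mp hx₀ with h | h
        · exact huU h
        · exact huA h
      set G := H ∪ (insert u U ∪ A).powersetCard 2 with hG
      have hmemG : ∀ e, e ∈ G ↔ e ∈ H ∨ (e ⊆ insert u (U ∪ A) ∧ e.card = 2) := by
        intro e
        simp [hG, hins, Finset.mem_union, Finset.mem_powersetCard]
      have hufresh : ∀ e ∈ H, u ∉ e := fun e he => hfresh e he u (Finset.mem_insert_self u U)
      have hNsub : ∀ x ∈ closedNbhd V G {u}, x ∈ insert u (U ∪ A) := by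
        intro x hx
        rcases mem_closedNbhd.mp hx with h1 | ⟨_, h2⟩
        · obtain rfl := Finset.mem_singleton.mp h1; exact Finset.mem_insert_self _ _
        · rcases (hmemG _).mp h2 with h3 | ⟨h3, _⟩
          · exact absurd (show u ∈ insert x {u} by simp) (hufresh _ h3)
          · exact h3 (Finset.mem_insert_self x {u})
      have hsms : IsSMS V 2 G {u} := by
        refine ⟨⟨by simp, {u, x₀}, ?_, by simp⟩, ?_, ?_⟩
        · refine (hmemG _).mpr (Or.inr ⟨?_, Finset.card_pair (Ne.symm hx₀u)⟩)
          intro y hy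
          rcases Finset.mem_insert.mp hy with rfl | hy'
          · exact Finset.mem_insert_self _ _
          · obtain rfl := Finset.mem_singleton.mp hy'
            exact Finset.mem_insert_of_mem hx₀
        · intro x hx
          rcases mem_closedNbhd.mp hx with h1 | ⟨h1, _⟩
          · obtain rfl := Finset.mem_singleton.mp h1; exact huV
          · exact h1
        · intro P hP hP2
          exact (hmemG _).mpr (Or.inr ⟨fun y hy => hNsub y (hP hy), hP2⟩)
      have hdel : delMS G {u} = H ∪ (U ∪ A).powersetCard 2 := by
        ext e
        simp only [mem_delMS]
        constructor
        · rintro ⟨h1, h2⟩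
          rcases (hmemG e).mp h1 with h3 | ⟨h3, h4⟩
          · exact Finset.mem_union_left _ h3
          · refine Finset.mem_union_right _ (Finset.mem_powersetCard.mpr ⟨?_, h4⟩)
            intro y hy
            rcases Finset.mem_insert.mp (h3 hy) with rfl | h5
            · exact absurd hy h2
            · exact h5
        · intro h1
          rcases Finset.mem_union.mp h1 with h2 | h2
          · exact ⟨(hmemG e).mpr (Or.inl h2), hufresh e h2⟩
          · obtain ⟨h3, h4⟩ := Finset.mem_powersetCard.mp h2
            refine ⟨(hmemG e).mpr (Or.inr ⟨h3.trans (Finset.subset_insert u _), h4⟩),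
              fun hu' => ?_⟩
            rcases Finset.mem_union.mp (h3 hu') with h5 | h5
            · exact huU h5
            · exact huA h5
      have hrec := ihU H A hU'V hAV (fun x hx => hdisj x (Finset.mem_insert_of_mem hx)) hH
        (fun e he x hx => hfresh e he x (Finset.mem_insert_of_mem hx)) hA
      exact Chordal.step {u} hsms (hdel ▸ hrec)
    · have hUA : U ∪ A = ∅ := Finset.not_nonempty_iff_eq_empty.mp hne
      have h2 : (insert u U ∪ A).powersetCard 2 = ∅ := by
        rw [hins, hUA]
        ext e
        simp only [Finset.mem_powersetCard, Finset.notMem_empty, iff_false, not_and]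
        intro hsub
        have h3 : e.card ≤ 1 := by
          have := Finset.card_le_card hsub
          simpa using this
        omega
      rw [h2, Finset.union_empty]
      exact hH


/-- Head case of the attachment lemma: the eliminated vertex is `a`. -/
lemma estar_head {V : Finset α} {Hp : Finset (Finset α)} {a : α}
    (hSMS : IsSMS V 2 Hp {a}) (hnext : Chordal V 2 (delMS Hp {a}))
    (U A : Finset α) (b : α) (hne : a ≠ b) (haA : a ∈ A) (hbA : b ∈ A)
    (hU : U.Nonempty) (hUV : U ⊆ V) (hAV : A ⊆ V) (hdisj : ∀ x ∈ U, x ∉ A)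
    (hab : ({a, b} : Finset α) ∈ Hp)
    (hfresh : ∀ e ∈ Hp, ∀ x ∈ U, x ∉ e)
    (hApairs : ∀ P ⊆ A, P.card = 2 → P ≠ ({a, b} : Finset α) → P ∈ Hp)
    (hcommon : ∀ w, ({w, a} : Finset α) ∈ Hp → ({w, b} : Finset α) ∈ Hp → w ∈ A) :
    Chordal V 2 ((Hp ∪ (U ∪ A).powersetCard 2).erase {a, b}) := by
  set G := (Hp ∪ (U ∪ A).powersetCard 2).erase {a, b} with hG
  have hmemG : ∀ e, e ∈ G ↔ (e ∈ Hp ∨ (e ⊆ U ∪ A ∧ e.card = 2)) ∧ e ≠ ({a, b} : Finset α) := by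
    intro e
    simp only [hG, Finset.mem_erase, Finset.mem_union, Finset.mem_powersetCard]
    tauto
  obtain ⟨u₀, hu₀⟩ := hU
  have haU : a ∉ U := fun h => hdisj a h haA
  have hu₀a : u₀ ≠ a := fun h => hdisj u₀ hu₀ (h ▸ haA)
  have hu₀b : u₀ ≠ b := fun h => hdisj u₀ hu₀ (h ▸ hbA)
  have haV : a ∈ V := hAV haA
  have hbV : b ∈ V := hAV hbA
  have hbKa : b ∈ closedNbhd V Hp {a} := mem_closedNbhd.mpr (Or.inr ⟨hbV, by
    rw [show insert b ({a} : Finset α) = {b, a} from rfl, Finset.pair_comm]; exact hab⟩)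
  have hN : ∀ x ∈ closedNbhd V G {a}, x ∈ U ∪ A ∧ x ≠ b := by
    intro x hx
    rcases mem_closedNbhd.mp hx with h1 | ⟨hxV, h2⟩
    · obtain rfl := Finset.mem_singleton.mp h1
      exact ⟨Finset.mem_union_right _ haA, hne⟩
    · have h3 := (hmemG _).mp h2
      have hxb : x ≠ b := by
        rintro rfl
        exact h3.2 (Finset.pair_comm x a)
      rcases h3.1 with h4 | ⟨h4, _⟩
      · have hxKa : x ∈ closedNbhd V Hp {a} := mem_closedNbhd.mpr (Or.inr ⟨hxV, h4⟩)
        have hsub : ({x, b} : Finset α) ⊆ closedNbhd V Hp {a} := by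
          intro y hy
          rcases Finset.mem_insert.mp hy with rfl | hy'
          · exact hxKa
          · obtain rfl := Finset.mem_singleton.mp hy'
            exact hbKa
        have hxbHp : ({x, b} : Finset α) ∈ Hp := hSMS.2.2 _ hsub (Finset.card_pair hxb)
        exact ⟨Finset.mem_union_right _ (hcommon x h4 hxbHp), hxb⟩
      · exact ⟨h4 (Finset.mem_insert_self x {a}), hxb⟩
  have hedge : ({u₀, a} : Finset α) ∈ G := by
    refine (hmemG _).mpr ⟨Or.inr ⟨?_, Finset.card_pair hu₀a⟩, ?_⟩
    · intro y hy
      rcases Finset.mem_insert.mp hy with rfl | hy'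
      · exact Finset.mem_union_left _ hu₀
      · obtain rfl := Finset.mem_singleton.mp hy'
        exact Finset.mem_union_right _ haA
    · intro hcontra
      have : u₀ ∈ ({a, b} : Finset α) := hcontra ▸ Finset.mem_insert_self u₀ {a}
      rcases Finset.mem_insert.mp this with h | h
      · exact hu₀a h
      · exact hu₀b (Finset.mem_singleton.mp h)
  have hsms : IsSMS V 2 G {a} := by
    refine ⟨⟨by simp, {u₀, a}, hedge, by simp⟩, ?_, ?_⟩
    · intro x hx
      rcases mem_closedNbhd.mp hx with h1 | ⟨h1, _⟩
      · obtain rfl := Finset.mem_singleton.mp h1; exact haV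
      · exact h1
    · intro P hP hP2
      refine (hmemG _).mpr ⟨Or.inr ⟨fun y hy => (hN y (hP hy)).1, hP2⟩, ?_⟩
      rintro rfl
      exact (hN b (hP (by simp))).2 rfl
  have hdel : delMS G {a} = delMS Hp {a} ∪ (U ∪ A.erase a).powersetCard 2 := by
    ext e
    simp only [mem_delMS, Finset.mem_union, Finset.mem_powersetCard]
    constructor
    · rintro ⟨h1, h2⟩
      rcases ((hmemG e).mp h1).1 with h3 | ⟨h3, h4⟩
      · exact Or.inl ⟨h3, h2⟩
      · refine Or.inr ⟨?_, h4⟩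
        intro y hy
        rcases Finset.mem_union.mp (h3 hy) with h5 | h5
        · exact Finset.mem_union_left _ h5
        · exact Finset.mem_union_right _ (Finset.mem_erase.mpr ⟨fun h => h2 (h ▸ hy), h5⟩)
    · rintro (⟨h1', h2'⟩ | ⟨h1, h2⟩)
      · refine ⟨(hmemG e).mpr ⟨Or.inl h1', ?_⟩, h2'⟩
        rintro rfl
        exact h2' (Finset.mem_insert_self a {b})
      · have hae : a ∉ e := by
          intro h
          rcases Finset.mem_union.mp (h1 h) with h3 | h3
          · exact haU h3
          · exact Finset.notMem_erase a A h3
        refine ⟨(hmemG e).mpr ⟨Or.inr ⟨?_, h2⟩, ?_⟩, hae⟩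
        · intro y hy
          rcases Finset.mem_union.mp (h1 hy) with h3 | h3
          · exact Finset.mem_union_left _ h3
          · exact Finset.mem_union_right _ (Finset.mem_erase.mp h3).2
        · rintro rfl
          exact hae (Finset.mem_insert_self a {b})
  have hrec := chordal_union_clique U (delMS Hp {a}) (A.erase a) hUV
    ((Finset.erase_subset a A).trans hAV)
    (fun x hx h => hdisj x hx (Finset.mem_erase.mp h).2)
    hnext
    (fun e he x hx => hfresh e (mem_delMS.mp he).1 x hx)
    (fun P hP hP2 => mem_delMS.mpr ⟨hApairs P (hP.trans (Finset.erase_subset a A)) hP2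
      (by rintro rfl; exact Finset.notMem_erase a A (hP (Finset.mem_insert_self a {b}))),
      fun h => Finset.notMem_erase a A (hP h)⟩)
  exact Chordal.step {a} hsms (hdel ▸ hrec)

/-- Key attachment lemma: if `Hp` is chordal containing the edge `{a,b}`, all pairs of
`A` except `{a,b}` are edges, all common neighbours of `a,b` lie in `A`, and `U` is a
fresh nonempty set, then attaching `U∪A` as a complete graph minus `{a,b}` and
removing `{a,b}` yields a chordal graph. -/
lemma estar {V : Finset α} {Hp : Finset (Finset α)} (h : Chordal V 2 Hp) :
    ∀ (U A : Finset α) (a b : α), a ≠ b → a ∈ A → b ∈ A → U.Nonempty →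
      U ⊆ V → A ⊆ V → (∀ x ∈ U, x ∉ A) → IsClutter V 2 Hp →
      ({a, b} : Finset α) ∈ Hp →
      (∀ e ∈ Hp, ∀ x ∈ U, x ∉ e) →
      (∀ P ⊆ A, P.card = 2 → P ≠ ({a, b} : Finset α) → P ∈ Hp) →
      (∀ w, ({w, a} : Finset α) ∈ Hp → ({w, b} : Finset α) ∈ Hp → w ∈ A) →
      Chordal V 2 ((Hp ∪ (U ∪ A).powersetCard 2).erase {a, b}) := by
  induction h with
  | empty =>
    intro U A a b _ _ _ _ _ _ _ _ hab _ _ _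
    exact absurd hab (Finset.notMem_empty _)
  | @step C e hSMS hnext ih =>
    intro U A a b hne haA hbA hU hUV hAV hdisj hcl hab hfresh hApairs hcommon
    have he1 : e.card = 1 := by have := hSMS.1.1; omega
    obtain ⟨v, rfl⟩ := Finset.card_eq_one.mp he1
    by_cases hva : v = a
    · subst hva
      exact estar_head hSMS hnext U A b hne haA hbA hU hUV hAV hdisj hab hfresh hApairs hcommon
    by_cases hvb : v = b
    · subst hvb
      have hres := estar_head hSMS hnext U A a hne.symm hbA haA hU hUV hAV hdisj
        (by rw [Finset.pair_comm v a]; exact hab)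
        hfresh
        (fun P h1 h2 h3 => hApairs P h1 h2 (fun hP => h3 (hP.trans (Finset.pair_comm a v))))
        (fun w h1 h2 => hcommon w h2 h1)
      rw [Finset.pair_comm a v]
      exact hres
    by_cases hvA : v ∈ A
    · -- interior case: v's whole closed neighbourhood sits inside A
      have hvaA : ({v, a} : Finset α) ∈ C := by
        refine hApairs {v, a} ?_ (Finset.card_pair hva) ?_
        · intro y hy
          rcases Finset.mem_insert.mp hy with rfl | hy'
          · exact hvA
          · obtain rfl := Finset.mem_singleton.mp hy'; exact haA
        · intro hC2
          have : v ∈ ({a, b} : Finset α) := hC2 ▸ Finset.mem_insert_self v {a}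
          rcases Finset.mem_insert.mp this with h' | h'
          · exact hva h'
          · exact hvb (Finset.mem_singleton.mp h')
      have hvbA : ({v, b} : Finset α) ∈ C := by
        refine hApairs {v, b} ?_ (Finset.card_pair hvb) ?_
        · intro y hy
          rcases Finset.mem_insert.mp hy with rfl | hy'
          · exact hvA
          · obtain rfl := Finset.mem_singleton.mp hy'; exact hbA
        · intro hC2
          have : v ∈ ({a, b} : Finset α) := hC2 ▸ Finset.mem_insert_self v {b}
          rcases Finset.mem_insert.mp this with h' | h'
          · exact hva h'
          · exact hvb (Finset.mem_singleton.mp h')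
      have haKv : a ∈ closedNbhd V C {v} := mem_closedNbhd.mpr (Or.inr ⟨hAV haA, by
        rw [show insert a ({v} : Finset α) = {a, v} from rfl, Finset.pair_comm]; exact hvaA⟩)
      have hbKv : b ∈ closedNbhd V C {v} := mem_closedNbhd.mpr (Or.inr ⟨hAV hbA, by
        rw [show insert b ({v} : Finset α) = {b, v} from rfl, Finset.pair_comm]; exact hvbA⟩)
      have hKA : ∀ x ∈ closedNbhd V C {v}, x ∈ A := by
        intro x hx
        rcases mem_closedNbhd.mp hx with h1 | ⟨hxV, h2⟩
        · obtain rfl := Finset.mem_singleton.mp h1; exact hvA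
        · by_cases hxa : x = a
          · subst hxa; exact haA
          by_cases hxb : x = b
          · subst hxb; exact hbA
          have hsa : ({x, a} : Finset α) ∈ C := by
            refine hSMS.2.2 _ ?_ (Finset.card_pair hxa)
            intro y hy
            rcases Finset.mem_insert.mp hy with rfl | hy'
            · exact mem_closedNbhd.mpr (Or.inr ⟨hxV, h2⟩)
            · obtain rfl := Finset.mem_singleton.mp hy'; exact haKv
          have hsb : ({x, b} : Finset α) ∈ C := by
            refine hSMS.2.2 _ ?_ (Finset.card_pair hxb)
            intro y hy
            rcases Finset.mem_insert.mp hy with rfl | hy'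
            · exact mem_closedNbhd.mpr (Or.inr ⟨hxV, h2⟩)
            · obtain rfl := Finset.mem_singleton.mp hy'; exact hbKv
          exact hcommon x hsa hsb
      have hihyp := ih (insert v U) (A.erase v) a b hne
        (Finset.mem_erase.mpr ⟨fun h' => hva h'.symm, haA⟩)
        (Finset.mem_erase.mpr ⟨fun h' => hvb h'.symm, hbA⟩)
        ⟨v, Finset.mem_insert_self v U⟩
        (by intro x hx
            rcases Finset.mem_insert.mp hx with rfl | hx'
            · exact hAV hvA
            · exact hUV hx')
        ((Finset.erase_subset v A).trans hAV)
        (by intro x hx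
            rcases Finset.mem_insert.mp hx with rfl | hx'
            · exact Finset.notMem_erase x A
            · exact fun h' => hdisj x hx' ((Finset.mem_erase.mp h').2))
        (fun e' he' => hcl e' (mem_delMS.mp he').1)
        (mem_delMS.mpr ⟨hab, by
          intro h'
          rcases Finset.mem_insert.mp h' with h'' | h''
          · exact hva h''
          · exact hvb (Finset.mem_singleton.mp h'')⟩)
        (by intro e' he' x hx
            rcases Finset.mem_insert.mp hx with rfl | hx'
            · exact (mem_delMS.mp he').2
            · exact hfresh e' (mem_delMS.mp he').1 x hx')
        (by intro P hP hP2 hP3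
            exact mem_delMS.mpr ⟨hApairs P (hP.trans (Finset.erase_subset v A)) hP2 hP3,
              fun h' => Finset.notMem_erase v A (hP h')⟩)
        (by intro w h1 h2
            have h1' := mem_delMS.mp h1
            have h2' := mem_delMS.mp h2
            refine Finset.mem_erase.mpr ⟨?_, hcommon w h1'.1 h2'.1⟩
            rintro rfl
            exact h1'.2 (Finset.mem_insert_self w {a}))
      have hset : insert v U ∪ A.erase v = U ∪ A := by
        ext x
        simp only [Finset.mem_union, Finset.mem_insert, Finset.mem_erase]
        constructor
        · rintro ((rfl | h') | ⟨_, h'⟩)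
          · exact Or.inr hvA
          · exact Or.inl h'
          · exact Or.inr h'
        · rintro (h' | h')
          · exact Or.inl (Or.inr h')
          · by_cases hxv : x = v
            · exact Or.inl (Or.inl hxv)
            · exact Or.inr ⟨hxv, h'⟩
      rw [hset] at hihyp
      have hHeq : (C ∪ (U ∪ A).powersetCard 2).erase {a, b}
          = (delMS C {v} ∪ (U ∪ A).powersetCard 2).erase {a, b} := by
        ext e'
        simp only [Finset.mem_erase, Finset.mem_union]
        constructor
        · rintro ⟨hne', h1 | h1⟩
          · by_cases hve : v ∈ e'
            · refine ⟨hne', Or.inr ?_⟩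
              obtain ⟨hsubV, hcard⟩ := hcl e' h1
              obtain ⟨x, hxv, rfl⟩ := eq_pair_of_mem hve hcard
              have hxKv : x ∈ closedNbhd V C {v} := by
                refine mem_closedNbhd.mpr (Or.inr ⟨hsubV (by simp), ?_⟩)
                rw [show insert x ({v} : Finset α) = {x, v} from rfl, Finset.pair_comm]
                exact h1
              refine Finset.mem_powersetCard.mpr ⟨?_, hcard⟩
              intro y hy
              rcases Finset.mem_insert.mp hy with rfl | hy'
              · exact Finset.mem_union_right _ hvA
              · obtain rfl := Finset.mem_singleton.mp hy'
                exact Finset.mem_union_right _ (hKA _ hxKv)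
            · exact ⟨hne', Or.inl (mem_delMS.mpr ⟨h1, hve⟩)⟩
          · exact ⟨hne', Or.inr h1⟩
        · rintro ⟨hne', h1 | h1⟩
          · exact ⟨hne', Or.inl (mem_delMS.mp h1).1⟩
          · exact ⟨hne', Or.inr h1⟩
      rw [hHeq]
      exact hihyp
    · -- v outside A : v is still simplicial after the attachment
      have hvU : v ∉ U := by
        obtain ⟨_, e₀, he₀, hve₀⟩ := hSMS.1
        exact fun h' => hfresh e₀ he₀ v h' (Finset.singleton_subset_iff.mp hve₀)
      obtain ⟨_, e₀, he₀, hve₀⟩ := hSMS.1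
      have hve₀' : v ∈ e₀ := Finset.singleton_subset_iff.mp hve₀
      set G := (C ∪ (U ∪ A).powersetCard 2).erase {a, b} with hG
      have hmemG : ∀ e', e' ∈ G ↔ (e' ∈ C ∨ (e' ⊆ U ∪ A ∧ e'.card = 2))
          ∧ e' ≠ ({a, b} : Finset α) := by
        intro e'
        simp only [hG, Finset.mem_erase, Finset.mem_union, Finset.mem_powersetCard]
        tauto
      have hNKv : ∀ x ∈ closedNbhd V G {v}, x ∈ closedNbhd V C {v} := by
        intro x hx
        rcases mem_closedNbhd.mp hx with h1 | ⟨hxV, h2⟩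
        · exact mem_closedNbhd.mpr (Or.inl h1)
        · rcases ((hmemG _).mp h2).1 with h3 | ⟨h3, _⟩
          · exact mem_closedNbhd.mpr (Or.inr ⟨hxV, h3⟩)
          · exfalso
            rcases Finset.mem_union.mp (h3 (Finset.mem_insert_of_mem (Finset.mem_singleton_self v))) with h' | h'
            · exact hvU h'
            · exact hvA h'
      have hvV : v ∈ V := hSMS.2.1 (mem_closedNbhd.mpr (Or.inl (by simp)))
      have hsmsG : IsSMS V 2 G {v} := by
        refine ⟨⟨by simp, e₀, ?_, hve₀⟩, ?_, ?_⟩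
        · refine (hmemG _).mpr ⟨Or.inl he₀, ?_⟩
          rintro rfl
          rcases Finset.mem_insert.mp hve₀' with h' | h'
          · exact hvA (h' ▸ haA)
          · exact hvA ((Finset.mem_singleton.mp h') ▸ hbA)
        · intro x hx
          rcases mem_closedNbhd.mp hx with h1 | ⟨h1, _⟩
          · obtain rfl := Finset.mem_singleton.mp h1; exact hvV
          · exact h1
        · intro P hP hP2
          have hPC : P ∈ C := hSMS.2.2 P (fun y hy => hNKv y (hP hy)) hP2
          refine (hmemG _).mpr ⟨Or.inl hPC, ?_⟩
          rintro rfl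
          have haN := hP (Finset.mem_insert_self a {b})
          have hbN := hP (by simp : b ∈ ({a, b} : Finset α))
          have haC : ({v, a} : Finset α) ∈ C := by
            rcases mem_closedNbhd.mp haN with h1 | ⟨_, h2⟩
            · exact absurd (Finset.mem_singleton.mp h1).symm hva
            · rcases ((hmemG _).mp h2).1 with h3 | ⟨h3, _⟩
              · rw [Finset.pair_comm]; exact h3
              · exfalso
                rcases Finset.mem_union.mp (h3 (Finset.mem_insert_of_mem (Finset.mem_singleton_self v))) with h' | h'
                · exact hvU h'
                · exact hvA h'
          have hbC : ({v, b} : Finset α) ∈ C := by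
            rcases mem_closedNbhd.mp hbN with h1 | ⟨_, h2⟩
            · exact absurd (Finset.mem_singleton.mp h1).symm hvb
            · rcases ((hmemG _).mp h2).1 with h3 | ⟨h3, _⟩
              · rw [Finset.pair_comm]; exact h3
              · exfalso
                rcases Finset.mem_union.mp (h3 (Finset.mem_insert_of_mem (Finset.mem_singleton_self v))) with h' | h'
                · exact hvU h'
                · exact hvA h'
          exact hvA (hcommon v haC hbC)
      have hdelG : delMS G {v} = (delMS C {v} ∪ (U ∪ A).powersetCard 2).erase {a, b} := by
        ext e'
        simp only [mem_delMS, Finset.mem_erase, Finset.mem_union]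
        constructor
        · rintro ⟨h1, h2⟩
          have h3 := (hmemG e').mp h1
          rcases h3.1 with h4 | h4
          · exact ⟨h3.2, Or.inl ⟨h4, h2⟩⟩
          · exact ⟨h3.2, Or.inr (Finset.mem_powersetCard.mpr h4)⟩
        · rintro ⟨h1, ⟨h2a, h2b⟩ | h2⟩
          · exact ⟨(hmemG e').mpr ⟨Or.inl h2a, h1⟩, h2b⟩
          · have h3 := Finset.mem_powersetCard.mp h2
            refine ⟨(hmemG e').mpr ⟨Or.inr h3, h1⟩, fun hv' => ?_⟩
            rcases Finset.mem_union.mp (h3.1 hv') with h' | h'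
            · exact hvU h'
            · exact hvA h'
      have hihyp := ih U A a b hne haA hbA hU hUV hAV hdisj
        (fun e' he' => hcl e' (mem_delMS.mp he').1)
        (mem_delMS.mpr ⟨hab, by
          intro h'
          rcases Finset.mem_insert.mp h' with h'' | h''
          · exact hva h''
          · exact hvb (Finset.mem_singleton.mp h'')⟩)
        (fun e' he' x hx => hfresh e' (mem_delMS.mp he').1 x hx)
        (fun P hP hP2 hP3 => mem_delMS.mpr ⟨hApairs P hP hP2 hP3, fun h' => hvA (hP h')⟩)
        (fun w h1 h2 => hcommon w (mem_delMS.mp h1).1 (mem_delMS.mp h2).1)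
      exact Chordal.step {v} hsmsG (hdelG ▸ hihyp)

/-- If `C` is a chordal graph (1-dimensional uniform clutter) and `F` is a
simplicial edge of `C` (i.e. `F ∈ SMS(C⁺)`), then the graph `C − F = C \ {F}` is chordal. -/
theorem chordal_graph_del_simplicial_edge (V : Finset α) (C : Finset (Finset α))
    (hC : IsClutter V 2 C) (h : Chordal V 2 C)
    (F : Finset α) (hF : IsSMS V 3 (ascent V 2 C) F) :
    Chordal V 2 (C.erase F) := by
  revert hC hF
  induction h with
  | empty =>
    intro _ hF
    obtain ⟨⟨_, T, hT, _⟩, _⟩ := hF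
    obtain ⟨_, hT3, hTsub⟩ := mem_ascent2.mp hT
    obtain ⟨P, hPT, hP2⟩ := Finset.exists_subset_card_eq (show 2 ≤ T.card by omega)
    exact absurd (hTsub P hPT hP2) (Finset.notMem_empty P)
  | @step C e hSMS hnext ih =>
    intro hC hF
    have he1 : e.card = 1 := by have := hSMS.1.1; omega
    obtain ⟨u, rfl⟩ := Finset.card_eq_one.mp he1
    have hFcard : F.card = 2 := by have := hF.1.1; omega
    have hFC : F ∈ C := by
      obtain ⟨_, T, hT, hFT⟩ := hF.1
      exact (mem_ascent2.mp hT).2.2 F hFT hFcard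
    by_cases huF : u ∈ F
    · exact erase_of_head_mem hSMS hnext huF hFcard
    · obtain ⟨a, b, hne, rfl⟩ := Finset.card_eq_two.mp hFcard
      have hC' : IsClutter V 2 (delMS C {u}) := fun e' he' => hC e' (mem_delMS.mp he').1
      have habC' : ({a, b} : Finset α) ∈ delMS C {u} := mem_delMS.mpr ⟨hFC, huF⟩
      have haV : a ∈ V := (hC _ hFC).1 (Finset.mem_insert_self a {b})
      have hbV : b ∈ V := (hC _ hFC).1 (by simp)
      have hua : u ≠ a := fun h' => huF (by rw [h']; simp)
      have hub : u ≠ b := fun h' => huF (by rw [h']; simp)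
      have huV : u ∈ V := hSMS.2.1 (mem_closedNbhd.mpr (Or.inl (by simp)))
      obtain ⟨_, e₀, he₀, hue₀⟩ := hSMS.1
      have hue₀' : u ∈ e₀ := Finset.singleton_subset_iff.mp hue₀
      by_cases h3 : ({u, a} : Finset α) ∈ C ∧ ({u, b} : Finset α) ∈ C
      · -- case 3: u is a common neighbour of a and b; use the attachment lemma
        have huK : u ∈ closedNbhd V C {u} := mem_closedNbhd.mpr (Or.inl (by simp))
        have haK : a ∈ closedNbhd V C {u} := mem_closedNbhd.mpr (Or.inr ⟨haV, by
          rw [show insert a ({u} : Finset α) = {a, u} from rfl, Finset.pair_comm]; exact h3.1⟩)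
        have hbK : b ∈ closedNbhd V C {u} := mem_closedNbhd.mpr (Or.inr ⟨hbV, by
          rw [show insert b ({u} : Finset α) = {b, u} from rfl, Finset.pair_comm]; exact h3.2⟩)
        have hKV : closedNbhd V C {u} ⊆ V := hSMS.2.1
        have huNF : u ∈ closedNbhd V (ascent V 2 C) {a, b} := by
          refine mem_closedNbhd.mpr (Or.inr ⟨huV, ?_⟩)
          refine mem_ascent2.mpr ⟨?_, ?_, ?_⟩
          · intro y hy
            rcases Finset.mem_insert.mp hy with rfl | hy'
            · exact huV
            · rcases Finset.mem_insert.mp hy' with rfl | hy''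
              · exact haV
              · obtain rfl := Finset.mem_singleton.mp hy''; exact hbV
          · rw [Finset.card_insert_of_notMem huF, Finset.card_pair hne]
          · intro P hP hP2
            rcases pair_subset_triple hP hP2 with rfl | rfl | rfl
            · exact h3.1
            · exact h3.2
            · exact hFC
        have hcommon : ∀ w, ({w, a} : Finset α) ∈ delMS C {u} →
            ({w, b} : Finset α) ∈ delMS C {u} → w ∈ (closedNbhd V C {u}).erase u := by
          intro w h1 h2
          obtain ⟨h1C, h1u⟩ := mem_delMS.mp h1
          obtain ⟨h2C, _⟩ := mem_delMS.mp h2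
          have hwu : w ≠ u := fun h' => h1u (by rw [← h']; simp)
          have hwa : w ≠ a := by
            rintro rfl
            have := (hC _ h1C).2
            simp at this
          have hwb : w ≠ b := by
            rintro rfl
            have := (hC _ h2C).2
            simp at this
          have hwV : w ∈ V := (hC _ h1C).1 (Finset.mem_insert_self w {a})
          have hwNF : w ∈ closedNbhd V (ascent V 2 C) {a, b} := by
            refine mem_closedNbhd.mpr (Or.inr ⟨hwV, ?_⟩)
            refine mem_ascent2.mpr ⟨?_, ?_, ?_⟩
            · intro y hy
              rcases Finset.mem_insert.mp hy with rfl | hy'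
              · exact hwV
              · rcases Finset.mem_insert.mp hy' with rfl | hy''
                · exact haV
                · obtain rfl := Finset.mem_singleton.mp hy''; exact hbV
            · rw [Finset.card_insert_of_notMem (notMem_pair hwa hwb), Finset.card_pair hne]
            · intro P hP hP2
              rcases pair_subset_triple hP hP2 with rfl | rfl | rfl
              · exact h1C
              · exact h2C
              · exact hFC
          have haNF : a ∈ closedNbhd V (ascent V 2 C) {a, b} :=
            mem_closedNbhd.mpr (Or.inl (Finset.mem_insert_self a {b}))
          have hS : ({u, w, a} : Finset α) ∈ ascent V 2 C := by
            refine hF.2.2 {u, w, a} ?_ ?_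
            · intro y hy
              rcases Finset.mem_insert.mp hy with rfl | hy'
              · exact huNF
              · rcases Finset.mem_insert.mp hy' with rfl | hy''
                · exact hwNF
                · obtain rfl := Finset.mem_singleton.mp hy''; exact haNF
            · rw [Finset.card_insert_of_notMem (notMem_pair (Ne.symm hwu) hua),
                Finset.card_pair hwa]
          have huwC : ({u, w} : Finset α) ∈ C := by
            refine (mem_ascent2.mp hS).2.2 {u, w} ?_ (Finset.card_pair (Ne.symm hwu))
            intro y hy
            rcases Finset.mem_insert.mp hy with rfl | hy'
            · exact Finset.mem_insert_self _ _
            · obtain rfl := Finset.mem_singleton.mp hy'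
              exact Finset.mem_insert_of_mem (Finset.mem_insert_self _ _)
          refine Finset.mem_erase.mpr ⟨hwu, mem_closedNbhd.mpr (Or.inr ⟨hwV, ?_⟩)⟩
          rw [show insert w ({u} : Finset α) = {w, u} from rfl, Finset.pair_comm]
          exact huwC
        have hEstar := estar hnext {u} ((closedNbhd V C {u}).erase u) a b hne
          (Finset.mem_erase.mpr ⟨Ne.symm hua, haK⟩)
          (Finset.mem_erase.mpr ⟨Ne.symm hub, hbK⟩)
          ⟨u, Finset.mem_singleton_self u⟩
          (Finset.singleton_subset_iff.mpr huV)
          ((Finset.erase_subset u _).trans hKV)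
          (by intro x hx
              obtain rfl := Finset.mem_singleton.mp hx
              exact Finset.notMem_erase x _)
          hC' habC'
          (by intro e' he' x hx
              obtain rfl := Finset.mem_singleton.mp hx
              exact (mem_delMS.mp he').2)
          (by intro P hP hP2 _
              exact mem_delMS.mpr ⟨hSMS.2.2 P (hP.trans (Finset.erase_subset u _)) hP2,
                fun h' => Finset.notMem_erase u _ (hP h')⟩)
          hcommon
        have hUK : ({u} : Finset α) ∪ (closedNbhd V C {u}).erase u = closedNbhd V C {u} := by
          ext x
          simp only [Finset.mem_union, Finset.mem_singleton, Finset.mem_erase]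
          constructor
          · rintro (rfl | ⟨_, h'⟩)
            · exact huK
            · exact h'
          · intro hx
            by_cases hxu : x = u
            · exact Or.inl hxu
            · exact Or.inr ⟨hxu, hx⟩
        rw [hUK] at hEstar
        have hfinal : C.erase {a, b}
            = (delMS C {u} ∪ (closedNbhd V C {u}).powersetCard 2).erase {a, b} := by
          ext e'
          simp only [Finset.mem_erase, Finset.mem_union]
          constructor
          · rintro ⟨hne', heC⟩
            refine ⟨hne', ?_⟩
            by_cases hue : u ∈ e'
            · obtain ⟨hsubV, hcard⟩ := hC e' heC
              obtain ⟨x, hxu, rfl⟩ := eq_pair_of_mem hue hcard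
              refine Or.inr (Finset.mem_powersetCard.mpr ⟨?_, hcard⟩)
              intro y hy
              rcases Finset.mem_insert.mp hy with rfl | hy'
              · exact huK
              · obtain rfl := Finset.mem_singleton.mp hy'
                refine mem_closedNbhd.mpr (Or.inr ⟨hsubV (by simp), ?_⟩)
                rw [show insert y ({u} : Finset α) = {y, u} from rfl, Finset.pair_comm]
                exact heC
            · exact Or.inl (mem_delMS.mpr ⟨heC, hue⟩)
          · rintro ⟨hne', h1 | h1⟩
            · exact ⟨hne', (mem_delMS.mp h1).1⟩
            · obtain ⟨h2, h4⟩ := Finset.mem_powersetCard.mp h1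
              exact ⟨hne', hSMS.2.2 e' h2 h4⟩
        rw [hfinal]
        exact hEstar
      · -- case 2: u not a common neighbour of a, b
        have hD1 : Chordal V 2 ((delMS C {u}).erase {a, b}) := by
          by_cases hTri : ∃ w, ({w, a} : Finset α) ∈ delMS C {u} ∧
              ({w, b} : Finset α) ∈ delMS C {u}
          · apply ih hC'
            obtain ⟨w, hw1, hw2⟩ := hTri
            have hwa : w ≠ a := by
              rintro rfl
              have := (hC' _ hw1).2
              simp at this
            have hwb : w ≠ b := by
              rintro rfl
              have := (hC' _ hw2).2
              simp at this
            have hwV : w ∈ V := (hC' _ hw1).1 (Finset.mem_insert_self w {a})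
            have hTasc : ({w, a, b} : Finset α) ∈ ascent V 2 (delMS C {u}) := by
              refine mem_ascent2.mpr ⟨?_, ?_, ?_⟩
              · intro y hy
                rcases Finset.mem_insert.mp hy with rfl | hy'
                · exact hwV
                · rcases Finset.mem_insert.mp hy' with rfl | hy''
                  · exact haV
                  · obtain rfl := Finset.mem_singleton.mp hy''; exact hbV
              · rw [Finset.card_insert_of_notMem (notMem_pair hwa hwb), Finset.card_pair hne]
              · intro P hP hP2
                rcases pair_subset_triple hP hP2 with rfl | rfl | rfl
                · exact hw1
                · exact hw2
                · exact habC'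
            constructor
            · exact ⟨by rw [Finset.card_pair hne], {w, a, b}, hTasc,
                Finset.subset_insert w {a, b}⟩
            · have hN'NF : closedNbhd V (ascent V 2 (delMS C {u})) {a, b}
                  ⊆ closedNbhd V (ascent V 2 C) {a, b} := by
                intro x hx
                rcases mem_closedNbhd.mp hx with h1 | ⟨hxV, h2⟩
                · exact mem_closedNbhd.mpr (Or.inl h1)
                · refine mem_closedNbhd.mpr (Or.inr ⟨hxV, ?_⟩)
                  obtain ⟨ha1, ha2, ha3⟩ := mem_ascent2.mp h2
                  exact mem_ascent2.mpr ⟨ha1, ha2,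
                    fun P hP hP2 => (mem_delMS.mp (ha3 P hP hP2)).1⟩
              have huN' : u ∉ closedNbhd V (ascent V 2 (delMS C {u})) {a, b} := by
                intro hx
                rcases mem_closedNbhd.mp hx with h1 | ⟨_, h2⟩
                · exact huF h1
                · obtain ⟨_, _, ha3⟩ := mem_ascent2.mp h2
                  have huaC' : ({u, a} : Finset α) ∈ delMS C {u} := by
                    refine ha3 {u, a} ?_ (Finset.card_pair hua)
                    intro y hy
                    rcases Finset.mem_insert.mp hy with rfl | hy'
                    · exact Finset.mem_insert_self _ _
                    · obtain rfl := Finset.mem_singleton.mp hy'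
                      exact Finset.mem_insert_of_mem (Finset.mem_insert_self _ _)
                  exact (mem_delMS.mp huaC').2 (Finset.mem_insert_self u {a})
              refine ⟨?_, ?_⟩
              · intro x hx
                rcases mem_closedNbhd.mp hx with h1 | ⟨h1, _⟩
                · rcases Finset.mem_insert.mp h1 with rfl | h1'
                  · exact haV
                  · obtain rfl := Finset.mem_singleton.mp h1'; exact hbV
                · exact h1
              · intro S hS hS3
                have hSasc : S ∈ ascent V 2 C := hF.2.2 S (fun y hy => hN'NF (hS hy)) hS3
                obtain ⟨hs1, hs2, hs3⟩ := mem_ascent2.mp hSasc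
                exact mem_ascent2.mpr ⟨hs1, hs2, fun P hP hP2 =>
                  mem_delMS.mpr ⟨hs3 P hP hP2, fun hu' => huN' (hS (hP hu'))⟩⟩
          · push_neg at hTri
            exact chordal_erase_no_triangle hnext a b hne habC'
              (fun w h1 h2 => hTri w h1 h2)
        have hsms2 : IsSMS V 2 (C.erase {a, b}) {u} := by
          refine ⟨⟨by simp, e₀, Finset.mem_erase.mpr ⟨?_, he₀⟩, hue₀⟩, ?_, ?_⟩
          · rintro rfl; exact huF hue₀'
          · intro x hx
            rcases mem_closedNbhd.mp hx with h1 | ⟨h1, _⟩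
            · obtain rfl := Finset.mem_singleton.mp h1; exact huV
            · exact h1
          · intro P hP hP2
            have hPC : P ∈ C := hSMS.2.2 P
              (hP.trans (closedNbhd_mono (Finset.erase_subset _ _))) hP2
            refine Finset.mem_erase.mpr ⟨?_, hPC⟩
            rintro rfl
            have haN := hP (Finset.mem_insert_self a {b})
            have hbN := hP (by simp : b ∈ ({a, b} : Finset α))
            have haC : ({u, a} : Finset α) ∈ C := by
              rcases mem_closedNbhd.mp haN with h1 | ⟨_, h2⟩
              · exact absurd (Finset.mem_singleton.mp h1).symm hua
              · have := (Finset.mem_erase.mp h2).2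
                rw [Finset.pair_comm]; exact this
            have hbC : ({u, b} : Finset α) ∈ C := by
              rcases mem_closedNbhd.mp hbN with h1 | ⟨_, h2⟩
              · exact absurd (Finset.mem_singleton.mp h1).symm hub
              · have := (Finset.mem_erase.mp h2).2
                rw [Finset.pair_comm]; exact this
            exact h3 ⟨haC, hbC⟩
        have hdel2 : delMS (C.erase {a, b}) {u} = (delMS C {u}).erase {a, b} := by
          ext e'
          simp only [mem_delMS, Finset.mem_erase]
          tauto
        exact Chordal.step {u} hsms2 (hdel2 ▸ hD1)

end ClutterPaper
end

section
/- Let C be a d-clutter on a finite vertex set V with C^+ = ∅ (C has no cliques on d + 2 vertices). If ⟨C⟩ is d-chorded, then ⟨C⟩ contains no d-cycles; that is, C is a CF-tree. -/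
namespace ClutterPaper

variable {α : Type*} [DecidableEq α]

/-- If the `d`-clutter `C` has empty ascent and `⟨C⟩` is `d`-chorded, then
`⟨C⟩` contains no `d`-cycles, i.e. `C` is a CF-tree. -/
theorem chorded_empty_ascent_cftree (V : Finset α) (d : ℕ) (C : Finset (Finset α))
    (hC : IsClutter V (d + 1) C)
    (hasc : ascent V (d + 1) C = ∅) (h : Chorded d C) :
    ¬ ∃ Ω : Finset (Finset α), IsCycle d Ω ∧ Ω ⊆ C := by
  classical
  suffices H : ∀ n (Ω : Finset (Finset α)), (vertexSet Ω).card ≤ n →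
      IsCycle d Ω → Ω ⊆ C → False by
    rintro ⟨Ω, h1, h2⟩
    exact H _ Ω le_rfl h1 h2
  intro n
  induction n with
  | zero =>
      intro Ω hcard hcyc hsub
      obtain ⟨F, hF⟩ := hcyc.1
      have hFv : F ⊆ vertexSet Ω := fun x hx => Finset.mem_biUnion.2 ⟨F, hF, hx⟩
      have h1 : F.card = d + 1 := hcyc.2.1 F hF
      have h2 := Finset.card_le_card hFv
      omega
  | succ n ih =>
      intro Ω hcard hcyc hsub
      obtain ⟨Ω', hΩ'mem, hmin⟩ := Finset.exists_min_image
        (Ω.powerset.filter fun X => IsCycle d X) Finset.card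
        ⟨Ω, by simp [hcyc]⟩
      rw [Finset.mem_filter, Finset.mem_powerset] at hΩ'mem
      obtain ⟨hΩ'Ω, cyc'⟩ := hΩ'mem
      have hΩ'C : Ω' ⊆ C := hΩ'Ω.trans hsub
      have fmc : FaceMinimalCycle d Ω' := by
        refine ⟨cyc', fun Ω'' hc hsub' => Finset.eq_of_subset_of_card_le hsub' ?_⟩
        refine hmin Ω'' ?_
        rw [Finset.mem_filter, Finset.mem_powerset]
        exact ⟨hsub'.trans hΩ'Ω, hc⟩
      have hvmono : vertexSet Ω' ⊆ vertexSet Ω :=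
        Finset.biUnion_subset_biUnion_of_subset_left _ hΩ'Ω
      by_cases hcomp : DComplete d Ω'
      · -- d-complete case: contradicts empty ascent
        obtain ⟨F, hF⟩ := cyc'.1
        have hFcard : F.card = d + 1 := cyc'.2.1 F hF
        have hFv : F ⊆ vertexSet Ω' := fun x hx => Finset.mem_biUnion.2 ⟨F, hF, hx⟩
        have hVsub : vertexSet Ω' ⊆ V := by
          intro x hx
          obtain ⟨G, hG, hxG⟩ := Finset.mem_biUnion.1 hx
          exact (hC G (hΩ'C hG)).1 hxG
        have hex : ∃ v ∈ vertexSet Ω', v ∉ F := by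
          by_contra hno
          push_neg at hno
          have hveq : vertexSet Ω' = F := Finset.Subset.antisymm hno hFv
          have hsing : Ω' = {F} := by
            apply Finset.Subset.antisymm
            · intro G hG
              have hGv : G ⊆ F := by
                have : G ⊆ vertexSet Ω' := fun x hx => Finset.mem_biUnion.2 ⟨G, hG, hx⟩
                rwa [hveq] at this
              have hGc : G.card = d + 1 := cyc'.2.1 G hG
              have : G = F := Finset.eq_of_subset_of_card_le hGv (by omega)
              simp [this]
            · simpa using hF
          obtain ⟨e, he, hecard⟩ := Finset.exists_subset_card_eq (s := F) (n := d) (by omega)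
          have heven := cyc'.2.2.2 e hecard
          rw [hsing] at heven
          rw [Finset.filter_singleton, if_pos he] at heven
          simp at heven
        obtain ⟨v, hv, hvF⟩ := hex
        have hA : insert v F ∈ ascent V (d + 1) C := by
          rw [ascent, Finset.mem_filter, Finset.mem_powersetCard]
          refine ⟨⟨?_, ?_⟩, ?_⟩
          · exact Finset.insert_subset (hVsub hv) (hFv.trans hVsub)
          · rw [Finset.card_insert_of_notMem hvF]; omega
          · intro G hG
            rw [Finset.mem_powersetCard] at hG
            have hGv : G ⊆ vertexSet Ω' :=
              hG.1.trans (Finset.insert_subset hv hFv)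
            exact hΩ'C (hcomp G hGv hG.2)
        rw [hasc] at hA
        exact absurd hA (Finset.notMem_empty _)
      · -- non-complete case: use chordedness and induction
        obtain ⟨k, Ωs, hk, hprops, _, _, _, hverts⟩ := h Ω' fmc hΩ'C hcomp
        have hi : (0 : ℕ) < k := by omega
        set i : Fin k := ⟨0, hi⟩
        refine ih (Ωs i) ?_ (hprops i).1 (hprops i).2
        have h1 : (vertexSet (Ωs i)).card < (vertexSet Ω').card :=
          Finset.card_lt_card (hverts i)
        have h2 := Finset.card_le_card hvmono
        omega

end ClutterPaper
end
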